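/- arXiv:0907.2854 — 2 statements merged into one kernel-verified Lean document; each statement's English description precedes it below -/
import Mathlib

section
/- The function V(x) = Δ(x) − E[Δ(x + S_{τ_x})] is monotone in the gaps: if x, y ∈ W satisfy x^{(j)} − x^{(j−1)} ≤ y^{(j)} − y^{(j−1)} for all 2 ≤ j ≤ k, then V(x) ≤ V(y). -/
open MeasureTheory ProbabilityTheory Filter Finset

noncomputable section

/-- The Weyl chamber `{x : x 0 < x 1 < ... < x (k-1)}`. -/
def weyl (k : ℕ) : Set (Fin k → ℝ) := {x | ∀ i j : Fin k, i < j → x i < x j}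

/-- The set of ordered pairs `(i,j)` with `i < j`. -/
def pairs (k : ℕ) : Finset (Fin k × Fin k) := Finset.univ.filter (fun p => p.1 < p.2)

/-- The Vandermonde determinant `Δ(x) = ∏_{i<j} (x j - x i)`. -/
def vdm (k : ℕ) (x : Fin k → ℝ) : ℝ := ∏ p ∈ pairs k, (x p.2 - x p.1)

/-- The perturbed Vandermonde product `Δ₁(x) = ∏_{i<j} (1 + |x j - x i|)`. -/
def vdmOne (k : ℕ) (x : Fin k → ℝ) : ℝ := ∏ p ∈ pairs k, (1 + |x p.2 - x p.1|)


lemma prod_pairs_fst {k : ℕ} (f : Fin k → Fin k → ℝ) :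
    ∏ p ∈ pairs k, f p.1 p.2 = ∏ i, ∏ j ∈ Finset.Ioi i, f i j := by
  rw [pairs, Finset.prod_filter, Fintype.prod_prod_type]
  refine Finset.prod_congr rfl fun i _ => ?_
  rw [← Finset.prod_filter]
  refine Finset.prod_congr ?_ fun _ _ => rfl
  ext j; simp [Finset.mem_Ioi]

lemma prod_pairs_snd {k : ℕ} (f : Fin k → Fin k → ℝ) :
    ∏ p ∈ pairs k, f p.1 p.2 = ∏ j, ∏ i ∈ Finset.Iio j, f i j := by
  rw [pairs, Finset.prod_filter, Fintype.prod_prod_type, Finset.prod_comm]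
  refine Finset.prod_congr rfl fun j _ => ?_
  rw [← Finset.prod_filter]
  refine Finset.prod_congr ?_ fun _ _ => rfl
  ext i; simp [Finset.mem_Iio]

lemma vdm_eq_det {k : ℕ} (x : Fin k → ℝ) : vdm k x = (Matrix.vandermonde x).det := by
  rw [Matrix.det_vandermonde]
  exact prod_pairs_fst (fun i j => x j - x i)

lemma vdm_pos {k : ℕ} {v : Fin k → ℝ} (hv : v ∈ weyl k) : 0 < vdm k v := by
  refine Finset.prod_pos fun p hp => ?_
  have : p.1 < p.2 := (Finset.mem_filter.mp hp).2
  have := hv p.1 p.2 this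
  linarith

/-- telescoping gap comparison -/
lemma gap_sub_le {k : ℕ} {u v : Fin k → ℝ}
    (hg : ∀ j : Fin k, ∀ h : (j : ℕ) + 1 < k, u ⟨(j : ℕ) + 1, h⟩ - u j ≤ v ⟨(j : ℕ) + 1, h⟩ - v j)
    {i j : Fin k} (hij : i ≤ j) : u j - u i ≤ v j - v i := by
  obtain ⟨d, hd⟩ : ∃ d, (j : ℕ) = (i : ℕ) + d := ⟨j - i, by omega⟩
  induction d generalizing j with
  | zero =>
    have : j = i := Fin.ext (by omega)
    subst this; simp
  | succ d ih =>
    have hjk : (i : ℕ) + d < k := by have := j.isLt; omega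
    have hij' : i ≤ (⟨(i : ℕ) + d, hjk⟩ : Fin k) := by simp [Fin.le_def]
    have h1 : u ⟨(i : ℕ) + d, hjk⟩ - u i ≤ v ⟨(i : ℕ) + d, hjk⟩ - v i := ih hij' rfl
    have hlt : (i : ℕ) + d + 1 < k := by have := j.isLt; omega
    have h2 := hg (⟨(i : ℕ) + d, hjk⟩ : Fin k) hlt
    have hjj : j = ⟨(i : ℕ) + d + 1, hlt⟩ := Fin.ext (by simp; omega)
    rw [hjj]
    simp only [Fin.val_mk] at h2 ⊢
    linarith

lemma weyl_of_gaps {k : ℕ} {u v : Fin k → ℝ} (hu : u ∈ weyl k)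
    (hg : ∀ j : Fin k, ∀ h : (j : ℕ) + 1 < k, u ⟨(j : ℕ) + 1, h⟩ - u j ≤ v ⟨(j : ℕ) + 1, h⟩ - v j) :
    v ∈ weyl k := by
  intro i j hij
  have := gap_sub_le hg (le_of_lt hij)
  have := hu i j hij
  linarith

lemma vdm_le_of_gaps {k : ℕ} {u v : Fin k → ℝ} (hu : u ∈ weyl k)
    (hg : ∀ j : Fin k, ∀ h : (j : ℕ) + 1 < k, u ⟨(j : ℕ) + 1, h⟩ - u j ≤ v ⟨(j : ℕ) + 1, h⟩ - v j) :
    vdm k u ≤ vdm k v := by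
  refine Finset.prod_le_prod (fun p hp => ?_) (fun p hp => ?_)
  · have : p.1 < p.2 := (Finset.mem_filter.mp hp).2
    have := hu p.1 p.2 this; linarith
  · exact gap_sub_le hg (le_of_lt (Finset.mem_filter.mp hp).2)

lemma abs_vdm_le {k : ℕ} (w : Fin k → ℝ) :
    |vdm k w| ≤ ∏ j, (1 + |w j|) ^ (k - 1) := by
  have h1 : |vdm k w| ≤ ∏ p ∈ pairs k, (1 + |w p.1|) * (1 + |w p.2|) := by
    rw [vdm, Finset.abs_prod]
    refine Finset.prod_le_prod (fun p _ => abs_nonneg _) (fun p _ => ?_)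
    have h2 := abs_sub_abs_le_abs_sub (w p.2) (w p.1)
    have := abs_sub (w p.2) (w p.1)
    have h0a := abs_nonneg (w p.1); have h0b := abs_nonneg (w p.2)
    calc |w p.2 - w p.1| ≤ |w p.2| + |w p.1| := abs_sub _ _
      _ ≤ (1 + |w p.1|) * (1 + |w p.2|) := by nlinarith
  refine h1.trans (le_of_eq ?_)
  rw [Finset.prod_mul_distrib]
  have hfst : ∏ p ∈ pairs k, (1 + |w p.1|) = ∏ i, (1 + |w i|) ^ (Finset.Ioi i).card := by
    rw [prod_pairs_fst (fun i _ => 1 + |w i|)]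
    exact Finset.prod_congr rfl fun i _ => Finset.prod_const _
  have hsnd : ∏ p ∈ pairs k, (1 + |w p.2|) = ∏ j, (1 + |w j|) ^ (Finset.Iio j).card := by
    rw [prod_pairs_snd (fun _ j => 1 + |w j|)]
    exact Finset.prod_congr rfl fun j _ => Finset.prod_const _
  rw [hfst, hsnd, ← Finset.prod_mul_distrib]
  refine Finset.prod_congr rfl fun i _ => ?_
  rw [← pow_add]
  congr 1
  have h1 : (Finset.Ioi i).card = k - 1 - (i : ℕ) := by
    simpa using Fin.card_Ioi i
  have h2 : (Finset.Iio i).card = (i : ℕ) := by simpa using Fin.card_Iio i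
  rw [h1, h2]
  have := i.isLt; omega

lemma continuous_vdm (k : ℕ) : Continuous (vdm k) := by
  refine continuous_finset_prod _ fun p _ => ?_
  exact (continuous_apply p.2).sub (continuous_apply p.1)

lemma measurableSet_weyl (k : ℕ) : MeasurableSet (weyl k) := by
  have : weyl k = ⋂ (i : Fin k), ⋂ (j : Fin k), ⋂ (_ : i < j), {x : Fin k → ℝ | x i < x j} := by
    ext x; simp [weyl, Set.mem_iInter]
  rw [this]
  exact MeasurableSet.iInter fun i => MeasurableSet.iInter fun j => MeasurableSet.iInter
    fun _ => measurableSet_lt (measurable_pi_apply i) (measurable_pi_apply j)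

section Blk

variable {k : ℕ} {Ω : Type} [MeasurableSpace Ω]

/-- `g` is a measurable function of the variables `ξ i j` for `(i,j) ∈ t`. -/
def blk (ξ : ℕ → Fin k → Ω → ℝ) (t : Finset (ℕ × Fin k)) (g : Ω → ℝ) : Prop :=
  ∃ G : (({p // p ∈ t}) → ℝ) → ℝ, Measurable G ∧ ∀ ω, g ω = G (fun p => ξ p.1.1 p.1.2 ω)

lemma blk_of (ξ : ℕ → Fin k → Ω → ℝ) (t : Finset (ℕ × Fin k)) (F : (ℕ → Fin k → ℝ) → ℝ)
    (hF : Measurable F)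
    (hdep : ∀ u u' : ℕ → Fin k → ℝ, (∀ p ∈ t, u p.1 p.2 = u' p.1 p.2) → F u = F u') :
    blk ξ t (fun ω => F (fun i j => ξ i j ω)) := by
  classical
  refine ⟨fun v => F (fun i j => if h : (i, j) ∈ t then v ⟨(i, j), h⟩ else 0), ?_, ?_⟩
  · refine hF.comp ?_
    refine measurable_pi_lambda _ fun i => measurable_pi_lambda _ fun j => ?_
    by_cases h : (i, j) ∈ t
    · simpa [h] using measurable_pi_apply (⟨(i, j), h⟩ : {p // p ∈ t})
    · simpa [h] using (measurable_const : Measurable fun _ : ({p // p ∈ t}) → ℝ => (0 : ℝ))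
  · intro ω
    refine hdep _ _ fun p hp => ?_
    have hp' : (p.1, p.2) ∈ t := by simpa using hp
    simp [hp']

lemma blk.mono {ξ : ℕ → Fin k → Ω → ℝ} {t t' : Finset (ℕ × Fin k)} (hsub : t ⊆ t') {g : Ω → ℝ}
    (h : blk ξ t g) : blk ξ t' g := by
  obtain ⟨G, hG, hg⟩ := h
  exact ⟨fun v => G (fun p => v ⟨p.1, hsub p.2⟩),
    hG.comp (measurable_pi_lambda _ fun p => measurable_pi_apply _), fun ω => hg ω⟩

lemma blk.mul {ξ : ℕ → Fin k → Ω → ℝ} {t : Finset (ℕ × Fin k)} {g h : Ω → ℝ}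
    (hg : blk ξ t g) (hh : blk ξ t h) : blk ξ t (fun ω => g ω * h ω) := by
  obtain ⟨G, hG, hgG⟩ := hg
  obtain ⟨H, hH, hhH⟩ := hh
  exact ⟨fun v => G v * H v, hG.mul hH, fun ω => by show g ω * h ω = _; rw [hgG ω, hhH ω]⟩

lemma blk.const (ξ : ℕ → Fin k → Ω → ℝ) (t : Finset (ℕ × Fin k)) (c : ℝ) :
    blk ξ t (fun _ => c) := ⟨fun _ => c, measurable_const, fun _ => rfl⟩

lemma blk.measurable {ξ : ℕ → Fin k → Ω → ℝ} (hmeas : ∀ i j, Measurable (ξ i j))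
    {t : Finset (ℕ × Fin k)} {g : Ω → ℝ} (h : blk ξ t g) : Measurable g := by
  obtain ⟨G, hG, hg⟩ := h
  have : g = fun ω => G (fun p => ξ p.1.1 p.1.2 ω) := funext hg
  rw [this]
  exact hG.comp (measurable_pi_lambda _ fun p => hmeas p.1.1 p.1.2)

lemma blk_indep {μ : Measure Ω} (ξ : ℕ → Fin k → Ω → ℝ) (hmeas : ∀ i j, Measurable (ξ i j))
    (hindep : iIndepFun (fun p : ℕ × Fin k => ξ p.1 p.2) μ)
    {s t : Finset (ℕ × Fin k)} (hst : Disjoint s t) {g h : Ω → ℝ}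
    (hg : blk ξ s g) (hh : blk ξ t h) : IndepFun g h μ := by
  obtain ⟨G, hG, hgG⟩ := hg
  obtain ⟨H, hH, hhH⟩ := hh
  have base := hindep.indepFun_finset s t hst (fun p => hmeas p.1 p.2)
  have hcomp := base.comp hG hH
  have e1 : g = G ∘ (fun a (i : {p // p ∈ s}) => ξ (i : ℕ × Fin k).1 (i : ℕ × Fin k).2 a) :=
    funext fun ω => hgG ω
  have e2 : h = H ∘ (fun a (i : {p // p ∈ t}) => ξ (i : ℕ × Fin k).1 (i : ℕ × Fin k).2 a) :=
    funext fun ω => hhH ω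
  rw [e1, e2]
  exact hcomp

lemma blk_prod_integral {μ : Measure Ω} [IsProbabilityMeasure μ]
    (ξ : ℕ → Fin k → Ω → ℝ) (hmeas : ∀ i j, Measurable (ξ i j))
    (hindep : iIndepFun (fun p : ℕ × Fin k => ξ p.1 p.2) μ)
    {ι' : Type} [DecidableEq ι'] (B : ι' → Finset (ℕ × Fin k)) (h : ι' → Ω → ℝ)
    (s : Finset ι') (hdisj : ∀ a ∈ s, ∀ b ∈ s, a ≠ b → Disjoint (B a) (B b))
    (hblk : ∀ a ∈ s, blk ξ (B a) (h a)) (hint : ∀ a ∈ s, Integrable (h a) μ) :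
    blk ξ (s.biUnion B) (fun ω => ∏ a ∈ s, h a ω) ∧
      Integrable (fun ω => ∏ a ∈ s, h a ω) μ ∧
      ∫ ω, ∏ a ∈ s, h a ω ∂μ = ∏ a ∈ s, ∫ ω, h a ω ∂μ := by
  classical
  revert hdisj hblk hint
  induction s using Finset.induction_on with
  | empty =>
    intro _ _ _
    refine ⟨?_, by simpa using (integrable_const (1 : ℝ)), by simp⟩
    simpa using blk.const ξ ∅ 1
  | @insert a s ha ih =>
    intro hdisj hblk hint
    obtain ⟨hb1, hb2, hb3⟩ := ih
      (fun a' ha' b hb hab => hdisj _ (Finset.mem_insert_of_mem ha') _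
        (Finset.mem_insert_of_mem hb) hab)
      (fun b hb => hblk _ (Finset.mem_insert_of_mem hb))
      (fun b hb => hint _ (Finset.mem_insert_of_mem hb))
    have hmema := Finset.mem_insert_self a s
    have hdisj2 : Disjoint (B a) (s.biUnion B) := by
      rw [Finset.disjoint_biUnion_right]
      intro b hb
      exact hdisj a hmema b (Finset.mem_insert_of_mem hb) (by rintro rfl; exact ha hb)
    have hindep2 : IndepFun (h a) (fun ω => ∏ b ∈ s, h b ω) μ :=
      blk_indep ξ hmeas hindep hdisj2 (hblk a hmema) hb1
    have hint2 : Integrable (fun ω => h a ω * ∏ b ∈ s, h b ω) μ := by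
      have := hindep2.integrable_mul (hint a hmema) hb2
      exact this
    refine ⟨?_, ?_, ?_⟩
    · have : blk ξ (B a ∪ s.biUnion B) (fun ω => h a ω * ∏ b ∈ s, h b ω) :=
        ((hblk a hmema).mono Finset.subset_union_left).mul (hb1.mono Finset.subset_union_right)
      have e : (insert a s).biUnion B = B a ∪ s.biUnion B := Finset.biUnion_insert
      rw [e]
      convert this using 1
      funext ω
      rw [Finset.prod_insert ha]
    · convert hint2 using 1
      funext ω
      rw [Finset.prod_insert ha]
    · have hmul := hindep2.integral_mul_eq_mul_integral (hint a hmema).1 hb2.1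
      calc ∫ ω, ∏ b ∈ insert a s, h b ω ∂μ
          = ∫ ω, h a ω * ∏ b ∈ s, h b ω ∂μ := by
            refine integral_congr_ae (Filter.Eventually.of_forall fun ω => ?_)
            show ∏ b ∈ insert a s, h b ω = h a ω * ∏ b ∈ s, h b ω
            exact Finset.prod_insert ha
        _ = (∫ ω, h a ω ∂μ) * ∫ ω, ∏ b ∈ s, h b ω ∂μ := by simpa [Pi.mul_apply] using hmul
        _ = ∏ b ∈ insert a s, ∫ ω, h b ω ∂μ := by rw [Finset.prod_insert ha, hb3]

end Blk

section Main

open scoped ENNReal NNReal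

variable {k : ℕ} {Ω : Type} [MeasurableSpace Ω] (μ : Measure Ω) [IsProbabilityMeasure μ]

lemma moment_integrable (ξ₀ : Ω → ℝ) (hmeas₀ : Measurable ξ₀) {α : ℝ} (hα : 0 < α)
    (hint : Integrable (fun ω => |ξ₀ ω| ^ α) μ) {e : ℕ} (he : (e : ℝ) ≤ α) :
    Integrable (fun ω => ξ₀ ω ^ e) μ := by
  refine Integrable.mono' ((integrable_const (1:ℝ)).add hint)
    ((hmeas₀.pow_const e).aestronglyMeasurable) (Filter.Eventually.of_forall fun ω => ?_)
  have h0 : (0:ℝ) ≤ |ξ₀ ω| := abs_nonneg _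
  have hnorm : ‖ξ₀ ω ^ e‖ = |ξ₀ ω| ^ e := by rw [Real.norm_eq_abs, abs_pow]
  rw [hnorm]
  show |ξ₀ ω| ^ e ≤ 1 + |ξ₀ ω| ^ α
  by_cases h1 : |ξ₀ ω| ≤ 1
  · have h2 : |ξ₀ ω| ^ e ≤ 1 := pow_le_one₀ h0 h1
    have h3 : (0:ℝ) ≤ |ξ₀ ω| ^ α := Real.rpow_nonneg h0 _
    calc |ξ₀ ω| ^ e ≤ 1 := h2
      _ ≤ 1 + |ξ₀ ω| ^ α := by linarith
  · push_neg at h1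
    have h2 : |ξ₀ ω| ^ e = |ξ₀ ω| ^ (e : ℝ) := (Real.rpow_natCast _ e).symm
    rw [h2]
    have h3 := Real.rpow_le_rpow_of_exponent_le (le_of_lt h1) he
    linarith

lemma memLp_base (ξ₀ : Ω → ℝ) (hmeas₀ : Measurable ξ₀) {α : ℝ} (hα : 0 < α)
    (hint : Integrable (fun ω => |ξ₀ ω| ^ α) μ) :
    MemLp ξ₀ (ENNReal.ofReal α) μ := by
  have q0 : ENNReal.ofReal α ≠ 0 := by simp [ENNReal.ofReal_eq_zero]; linarith
  have qt : ENNReal.ofReal α ≠ ⊤ := ENNReal.ofReal_ne_top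
  have h1 : MemLp (fun ω => ‖ξ₀ ω‖ ^ (ENNReal.ofReal α).toReal) (ENNReal.ofReal α / ENNReal.ofReal α) μ := by
    rw [ENNReal.div_self q0 qt]
    rw [memLp_one_iff_integrable]
    have : (ENNReal.ofReal α).toReal = α := ENNReal.toReal_ofReal (le_of_lt hα)
    rw [this]
    simpa [Real.norm_eq_abs] using hint
  exact (memLp_norm_rpow_iff hmeas₀.aestronglyMeasurable q0 qt).mp h1

variable (ξ : ℕ → Fin k → Ω → ℝ) (ξ₀ : Ω → ℝ) (S : ℕ → Ω → Fin k → ℝ)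

lemma col_memLp (hmeas₀ : Measurable ξ₀)
    (hident : ∀ i j, IdentDistrib (ξ i j) ξ₀ μ μ)
    (hS : ∀ n ω j, S n ω j = ∑ i ∈ Finset.range n, ξ i j ω)
    (hk : 3 ≤ k) (hmom : ∃ α : ℝ, 2 < α ∧ (k : ℝ) - 1 ≤ α ∧ Integrable (fun ω => |ξ₀ ω| ^ α) μ)
    (z : ℝ) (n : ℕ) (j : Fin k) :
    MemLp (fun ω => z + S n ω j) (((k - 1 : ℕ) : ℝ≥0∞)) μ := by
  obtain ⟨α, hα2, hαk, hint⟩ := hmom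
  have hα0 : 0 < α := by linarith
  have hbase := memLp_base μ ξ₀ hmeas₀ hα0 hint
  have hcast : ((k - 1 : ℕ) : ℝ) = (k : ℝ) - 1 := by
    have h1 : 1 ≤ k := by omega
    push_cast [h1]
    ring
  have hle : (((k - 1 : ℕ) : ℝ≥0∞)) ≤ ENNReal.ofReal α := by
    rw [← ENNReal.ofReal_natCast]
    exact ENNReal.ofReal_le_ofReal (by rw [hcast]; exact hαk)
  have hbase' : MemLp ξ₀ (((k - 1 : ℕ) : ℝ≥0∞)) μ := hbase.mono_exponent hle
  have heach : ∀ i : ℕ, MemLp (ξ i j) (((k - 1 : ℕ) : ℝ≥0∞)) μ := fun i =>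
    ((hident i j).memLp_iff).mpr hbase'
  have heq : (fun ω => z + S n ω j) = fun ω => z + ∑ i ∈ Finset.range n, ξ i j ω :=
    funext fun ω => by rw [hS]
  rw [heq]
  have hsum := memLp_finsetSum (Finset.range n) (f := fun i => ξ i j)
    (p := ((k - 1 : ℕ) : ℝ≥0∞)) (fun i _ => heach i)
  exact (memLp_const z).add hsum

lemma col_int (hmeas₀ : Measurable ξ₀)
    (hident : ∀ i j, IdentDistrib (ξ i j) ξ₀ μ μ)
    (hS : ∀ n ω j, S n ω j = ∑ i ∈ Finset.range n, ξ i j ω)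
    (hk : 3 ≤ k) (hmom : ∃ α : ℝ, 2 < α ∧ (k : ℝ) - 1 ≤ α ∧ Integrable (fun ω => |ξ₀ ω| ^ α) μ)
    (z : ℝ) (n : ℕ) (j : Fin k) :
    Integrable (fun ω => (1 + |z + S n ω j|) ^ (k - 1)) μ := by
  have hm := col_memLp μ ξ ξ₀ S hmeas₀ hident hS hk hmom z n j
  have habs : MemLp (fun ω => 1 + |z + S n ω j|) (((k - 1 : ℕ) : ℝ≥0∞)) μ := by
    have := hm.norm
    simp only [Real.norm_eq_abs] at this
    exact (memLp_const (1:ℝ)).add this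
  have hp0 : (((k - 1 : ℕ) : ℝ≥0∞)) ≠ 0 := by
    simp only [ne_eq, Nat.cast_eq_zero]
    omega
  have hint := habs.integrable_norm_rpow hp0 (by simp)
  have : (fun ω => ‖1 + |z + S n ω j|‖ ^ (((k - 1 : ℕ) : ℝ≥0∞)).toReal)
      = fun ω => (1 + |z + S n ω j|) ^ (k - 1) := by
    funext ω
    rw [Real.norm_of_nonneg (by positivity)]
    have ht : ((( k - 1 : ℕ) : ℝ≥0∞)).toReal = ((k-1:ℕ) : ℝ) := ENNReal.toReal_natCast (k-1)
    rw [ht, Real.rpow_natCast]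
  rwa [this] at hint

lemma col_blk (hS : ∀ n ω j, S n ω j = ∑ i ∈ Finset.range n, ξ i j ω) (z : ℝ) (n : ℕ) (j : Fin k) :
    blk ξ (Finset.range n ×ˢ {j}) (fun ω => (1 + |z + S n ω j|) ^ (k - 1)) := by
  have hb := blk_of ξ (Finset.range n ×ˢ {j})
    (fun u => (1 + |z + ∑ i ∈ Finset.range n, u i j|) ^ (k - 1))
    (by
      have hsum : Measurable fun u : ℕ → Fin k → ℝ => ∑ i ∈ Finset.range n, u i j :=
        Finset.measurable_sum _ fun i _ => (measurable_pi_apply j).comp (measurable_pi_apply i)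
      exact ((measurable_const.add hsum).abs.const_add 1).pow_const _)
    (by
      intro u u' hcoord
      have : ∑ i ∈ Finset.range n, u i j = ∑ i ∈ Finset.range n, u' i j :=
        Finset.sum_congr rfl fun i hi =>
          hcoord (i, j) (Finset.mem_product.mpr ⟨hi, Finset.mem_singleton_self j⟩)
      show (1 + |z + ∑ i ∈ Finset.range n, u i j|) ^ (k - 1)
          = (1 + |z + ∑ i ∈ Finset.range n, u' i j|) ^ (k - 1)
      rw [this])
  have heq : (fun ω => (1 + |z + S n ω j|) ^ (k - 1))
      = fun ω => (1 + |z + ∑ i ∈ Finset.range n, (fun i' j' => ξ i' j' ω) i j|) ^ (k - 1) := by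
    funext ω; rw [hS]
  rw [heq]
  exact hb

lemma dom_int (hmeas₀ : Measurable ξ₀) (hmeas : ∀ i j, Measurable (ξ i j))
    (hindep : iIndepFun (fun p : ℕ × Fin k => ξ p.1 p.2) μ)
    (hident : ∀ i j, IdentDistrib (ξ i j) ξ₀ μ μ)
    (hS : ∀ n ω j, S n ω j = ∑ i ∈ Finset.range n, ξ i j ω)
    (hk : 3 ≤ k) (hmom : ∃ α : ℝ, 2 < α ∧ (k : ℝ) - 1 ≤ α ∧ Integrable (fun ω => |ξ₀ ω| ^ α) μ)
    (z : Fin k → ℝ) (n : ℕ) :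
    Integrable (fun ω => ∏ j, (1 + |z j + S n ω j|) ^ (k - 1)) μ := by
  classical
  refine (blk_prod_integral ξ hmeas hindep (fun j => Finset.range n ×ˢ {j})
    (fun j ω => (1 + |z j + S n ω j|) ^ (k - 1)) Finset.univ ?_ ?_ ?_).2.1
  · intro a _ b _ hab
    rw [Finset.disjoint_left]
    intro p hp hp'
    have h1 : p.2 = a := Finset.mem_singleton.mp (Finset.mem_product.mp hp).2
    have h2 : p.2 = b := Finset.mem_singleton.mp (Finset.mem_product.mp hp').2
    exact hab (h1 ▸ h2)
  · intro j _
    exact col_blk ξ S hS (z j) n j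
  · intro j _
    exact col_int μ ξ ξ₀ S hmeas₀ hident hS hk hmom (z j) n j

lemma vdm_meas (hSmeas : ∀ n, StronglyMeasurable (S n)) (z : Fin k → ℝ) (n : ℕ) :
    Measurable (fun ω => vdm k (fun j => z j + S n ω j)) := by
  refine (continuous_vdm k).measurable.comp ?_
  refine measurable_pi_lambda _ fun j => ?_
  exact measurable_const.add ((measurable_pi_apply j).comp (hSmeas n).measurable)

lemma vdm_int (hmeas₀ : Measurable ξ₀) (hmeas : ∀ i j, Measurable (ξ i j))
    (hindep : iIndepFun (fun p : ℕ × Fin k => ξ p.1 p.2) μ)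
    (hident : ∀ i j, IdentDistrib (ξ i j) ξ₀ μ μ)
    (hS : ∀ n ω j, S n ω j = ∑ i ∈ Finset.range n, ξ i j ω)
    (hSmeas : ∀ n, StronglyMeasurable (S n))
    (hk : 3 ≤ k) (hmom : ∃ α : ℝ, 2 < α ∧ (k : ℝ) - 1 ≤ α ∧ Integrable (fun ω => |ξ₀ ω| ^ α) μ)
    (z : Fin k → ℝ) (n : ℕ) :
    Integrable (fun ω => vdm k (fun j => z j + S n ω j)) μ := by
  refine Integrable.mono' (dom_int μ ξ ξ₀ S hmeas₀ hmeas hindep hident hS hk hmom z n)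
    (vdm_meas S hSmeas z n).aestronglyMeasurable (Filter.Eventually.of_forall fun ω => ?_)
  rw [Real.norm_eq_abs]
  exact abs_vdm_le _

open Polynomial in
lemma monic_mom_poly (Mo : ℕ → ℝ) (h0 : Mo 0 = 1) (c : ℕ) :
    ∃ P : Polynomial ℝ, P.Monic ∧ P.natDegree = c ∧
      ∀ t : ℝ, P.eval t = ∑ m ∈ Finset.range (c + 1),
        t ^ m * ((c.choose m : ℝ) * Mo (c - m)) := by
  classical
  set q : Polynomial ℝ := ∑ m ∈ Finset.range c, C ((c.choose m : ℝ) * Mo (c - m)) * X ^ m with hq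
  have hdeg : q.degree < (c : WithBot ℕ) := by
    rw [hq]
    refine lt_of_le_of_lt (Polynomial.degree_sum_le _ _) ?_
    rw [Finset.sup_lt_iff (by exact_mod_cast WithBot.bot_lt_coe c)]
    intro m hm
    refine lt_of_le_of_lt (Polynomial.degree_mul_le _ _) ?_
    have hC := Polynomial.degree_C_le (a := ((c.choose m : ℝ) * Mo (c - m)))
    refine lt_of_le_of_lt (add_le_add hC (le_refl _)) ?_
    rw [zero_add]
    refine lt_of_le_of_lt (Polynomial.degree_X_pow_le m) ?_
    exact_mod_cast Finset.mem_range.mp hm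
  refine ⟨X ^ c + q, Polynomial.monic_X_pow_add hdeg, ?_, ?_⟩
  · have hmonic : (X ^ c + q).Monic := Polynomial.monic_X_pow_add hdeg
    have hd : (X ^ c + q).degree = (c : WithBot ℕ) := by
      rw [add_comm]
      rw [Polynomial.degree_add_eq_right_of_degree_lt (by simpa using hdeg)]
      exact Polynomial.degree_X_pow c
    exact Polynomial.natDegree_eq_of_degree_eq_some hd
  · intro t
    rw [Finset.sum_range_succ]
    simp only [Polynomial.eval_add, Polynomial.eval_pow, Polynomial.eval_X, hq,
      Polynomial.eval_finset_sum, Polynomial.eval_mul, Polynomial.eval_C,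
      Nat.choose_self, Nat.sub_self, h0, Nat.cast_one]
    rw [add_comm]
    congr 1
    · exact Finset.sum_congr rfl fun m _ => by ring
    · ring

lemma integral_mul_prod_xi (hmeas₀ : Measurable ξ₀) (hmeas : ∀ i j, Measurable (ξ i j))
    (hindep : iIndepFun (fun p : ℕ × Fin k => ξ p.1 p.2) μ)
    (hident : ∀ i j, IdentDistrib (ξ i j) ξ₀ μ μ)
    (n : ℕ) (g : Ω → ℝ)
    (hgblk : blk ξ (Finset.range n ×ˢ Finset.univ) g) (hgint : Integrable g μ)
    (e : Fin k → ℕ) (he : ∀ j, Integrable (fun ω => ξ₀ ω ^ (e j)) μ) :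
    Integrable (fun ω => g ω * ∏ j, ξ n j ω ^ (e j)) μ ∧
    ∫ ω, g ω * ∏ j, ξ n j ω ^ (e j) ∂μ
      = (∫ ω, g ω ∂μ) * ∏ j, (∫ ω, ξ₀ ω ^ (e j) ∂μ) := by
  classical
  have hid : ∀ j : Fin k, IdentDistrib (fun ω => ξ n j ω ^ (e j)) (fun ω => ξ₀ ω ^ (e j)) μ μ :=
    fun j => (hident n j).comp (measurable_id.pow_const (e j))
  have hie : ∀ j : Fin k, Integrable (fun ω => ξ n j ω ^ (e j)) μ :=
    fun j => ((hid j).integrable_iff).mpr (he j)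
  set B : Option (Fin k) → Finset (ℕ × Fin k) := fun o => match o with
    | none => Finset.range n ×ˢ Finset.univ
    | some j => {(n, j)} with hB
  set h : Option (Fin k) → Ω → ℝ := fun o => match o with
    | none => g
    | some j => fun ω => ξ n j ω ^ (e j) with hh
  have key := blk_prod_integral ξ hmeas hindep B h Finset.univ ?_ ?_ ?_
  · obtain ⟨_, hint, heq⟩ := key
    have hprod : ∀ ω, ∏ o : Option (Fin k), h o ω = g ω * ∏ j, ξ n j ω ^ (e j) := by
      intro ω
      rw [Fintype.prod_option]
    have hprod2 : ∏ o : Option (Fin k), ∫ ω, h o ω ∂μ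
        = (∫ ω, g ω ∂μ) * ∏ j, (∫ ω, ξ₀ ω ^ (e j) ∂μ) := by
      rw [Fintype.prod_option]
      congr 1
      exact Finset.prod_congr rfl fun j _ => (hid j).integral_eq
    constructor
    · refine hint.congr (Filter.Eventually.of_forall fun ω => ?_)
      exact hprod ω
    · rw [← hprod2, ← heq]
      exact integral_congr_ae (Filter.Eventually.of_forall fun ω => (hprod ω).symm)
  · intro a _ b _ hab
    match a, b with
    | none, none => exact absurd rfl hab
    | none, some j =>
      rw [Finset.disjoint_right]
      intro p hp
      have : p = (n, j) := Finset.mem_singleton.mp hp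
      subst this
      simp [hB, Finset.mem_product]
    | some j, none =>
      rw [Finset.disjoint_left]
      intro p hp
      have : p = (n, j) := Finset.mem_singleton.mp hp
      subst this
      simp [hB, Finset.mem_product]
    | some j, some j' =>
      rw [Finset.disjoint_left]
      intro p hp hp'
      have h1 : p = (n, j) := Finset.mem_singleton.mp hp
      have h2 : p = (n, j') := Finset.mem_singleton.mp hp'
      apply hab
      rw [h1] at h2
      simp_all
  · intro o _
    match o with
    | none => exact hgblk
    | some j =>
      exact ⟨fun v => v ⟨(n, j), Finset.mem_singleton_self _⟩ ^ (e j),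
        (measurable_pi_apply _).pow_const _, fun ω => rfl⟩
  · intro o _
    match o with
    | none => exact hgint
    | some j => exact hie j

/-- the one-step moment function `Q_c(t) = E (t + ξ₀)^c` written out binomially -/
def Qm (μ : Measure Ω) (ξ₀ : Ω → ℝ) (c : ℕ) (t : ℝ) : ℝ :=
  ∑ m ∈ Finset.range (c + 1), t ^ m * ((c.choose m : ℝ) * ∫ ω, ξ₀ ω ^ (c - m) ∂μ)

lemma claimA (hmeas₀ : Measurable ξ₀) (hmeas : ∀ i j, Measurable (ξ i j))
    (hindep : iIndepFun (fun p : ℕ × Fin k => ξ p.1 p.2) μ)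
    (hident : ∀ i j, IdentDistrib (ξ i j) ξ₀ μ μ)
    (hS : ∀ n ω j, S n ω j = ∑ i ∈ Finset.range n, ξ i j ω)
    (hk : 3 ≤ k) (hmom : ∃ α : ℝ, 2 < α ∧ (k : ℝ) - 1 ≤ α ∧ Integrable (fun ω => |ξ₀ ω| ^ α) μ)
    (z : Fin k → ℝ) (n : ℕ)
    (χ : Ω → ℝ) (hχblk : blk ξ (Finset.range n ×ˢ Finset.univ) χ) (hχ1 : ∀ ω, |χ ω| ≤ 1)
    (c : Fin k → ℕ) (hc : ∀ j, c j ≤ k - 1) :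
    Integrable (fun ω => χ ω * ∏ j, (z j + S n ω j + ξ n j ω) ^ (c j)) μ ∧
    Integrable (fun ω => χ ω * ∏ j, Qm μ ξ₀ (c j) (z j + S n ω j)) μ ∧
    ∫ ω, χ ω * ∏ j, (z j + S n ω j + ξ n j ω) ^ (c j) ∂μ
      = ∫ ω, χ ω * ∏ j, Qm μ ξ₀ (c j) (z j + S n ω j) ∂μ := by
  classical
  obtain ⟨α, hα2, hαk, hintα⟩ := hmom
  have hα0 : 0 < α := by linarith
  have hcastk : ((k - 1 : ℕ) : ℝ) = (k : ℝ) - 1 := by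
    have h1 : 1 ≤ k := by omega
    push_cast [h1]; ring
  have hmomInt : ∀ e : ℕ, e ≤ k - 1 → Integrable (fun ω => ξ₀ ω ^ e) μ := by
    intro e he
    refine moment_integrable μ ξ₀ hmeas₀ hα0 hintα ?_
    calc (e : ℝ) ≤ ((k - 1 : ℕ) : ℝ) := by exact_mod_cast he
      _ ≤ α := by rw [hcastk]; exact hαk
  set P := Fintype.piFinset (fun _ : Fin k => Finset.range (k)) with hP
  -- we use a common index set large enough; but we use the precise one below
  set Pc := Fintype.piFinset (fun j : Fin k => Finset.range (c j + 1)) with hPc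
  set gm : (Fin k → ℕ) → Ω → ℝ :=
    fun m ω => χ ω * ∏ j, ((z j + S n ω j) ^ (m j) * ((c j).choose (m j) : ℝ)) with hgm
  have hmle : ∀ m ∈ Pc, ∀ j, m j ≤ c j := by
    intro m hm j
    have := Finset.mem_range.mp ((Fintype.mem_piFinset.mp hm) j)
    omega
  -- blk of gm
  have hblk_gm : ∀ m : Fin k → ℕ, blk ξ (Finset.range n ×ˢ Finset.univ) (gm m) := by
    intro m
    refine hχblk.mul ?_
    have hb := blk_of ξ (Finset.range n ×ˢ Finset.univ)
      (fun u => ∏ j, ((z j + ∑ i ∈ Finset.range n, u i j) ^ (m j) * ((c j).choose (m j) : ℝ)))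
      (by
        refine Finset.measurable_prod _ fun j _ => ?_
        have hsum : Measurable fun u : ℕ → Fin k → ℝ => ∑ i ∈ Finset.range n, u i j :=
          Finset.measurable_sum _ fun i _ => (measurable_pi_apply j).comp (measurable_pi_apply i)
        exact ((measurable_const.add hsum).pow_const _).mul_const _)
      (by
        intro u u' hcoord
        show (∏ j, ((z j + ∑ i ∈ Finset.range n, u i j) ^ (m j) * ((c j).choose (m j) : ℝ)))
          = ∏ j, ((z j + ∑ i ∈ Finset.range n, u' i j) ^ (m j) * ((c j).choose (m j) : ℝ))
        refine Finset.prod_congr rfl fun j _ => ?_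
        have : ∑ i ∈ Finset.range n, u i j = ∑ i ∈ Finset.range n, u' i j :=
          Finset.sum_congr rfl fun i hi =>
            hcoord (i, j) (Finset.mem_product.mpr ⟨hi, Finset.mem_univ j⟩)
        rw [this])
    have heq : (fun ω => ∏ j, ((z j + S n ω j) ^ (m j) * ((c j).choose (m j) : ℝ)))
        = fun ω => ∏ j, ((z j + ∑ i ∈ Finset.range n, (fun i' j' => ξ i' j' ω) i j) ^ (m j)
            * ((c j).choose (m j) : ℝ)) := by
      funext ω
      exact Finset.prod_congr rfl fun j _ => by rw [hS]
    rw [heq]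
    exact hb
  -- integrability of gm
  have hint_gm : ∀ m : Fin k → ℕ, (∀ j, m j ≤ c j) → Integrable (gm m) μ := by
    intro m hm
    have hdom := (dom_int μ ξ ξ₀ S hmeas₀ hmeas hindep hident hS hk
      ⟨α, hα2, hαk, hintα⟩ z n).const_mul (∏ j, ((c j).choose (m j) : ℝ))
    refine Integrable.mono' hdom
      (((hblk_gm m).measurable hmeas).aestronglyMeasurable)
      (Filter.Eventually.of_forall fun ω => ?_)
    rw [Real.norm_eq_abs, hgm]
    have h1 : |χ ω * ∏ j, ((z j + S n ω j) ^ (m j) * ((c j).choose (m j) : ℝ))|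
        ≤ ∏ j, ((1 + |z j + S n ω j|) ^ (k - 1) * ((c j).choose (m j) : ℝ)) := by
      rw [abs_mul]
      have h2 : |χ ω| ≤ 1 := hχ1 ω
      have h3 : |∏ j, ((z j + S n ω j) ^ (m j) * ((c j).choose (m j) : ℝ))|
          ≤ ∏ j, ((1 + |z j + S n ω j|) ^ (k - 1) * ((c j).choose (m j) : ℝ)) := by
        rw [Finset.abs_prod]
        refine Finset.prod_le_prod (fun j _ => abs_nonneg _) (fun j _ => ?_)
        rw [abs_mul, abs_pow, Nat.abs_cast]
        refine mul_le_mul_of_nonneg_right ?_ (Nat.cast_nonneg _)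
        calc |z j + S n ω j| ^ (m j) ≤ (1 + |z j + S n ω j|) ^ (m j) := by
              refine pow_le_pow_left₀ (abs_nonneg _) (by linarith [abs_nonneg (z j + S n ω j)]) _
          _ ≤ (1 + |z j + S n ω j|) ^ (k - 1) := by
              refine pow_le_pow_right₀ (by linarith [abs_nonneg (z j + S n ω j)]) ?_
              exact le_trans (hm j) (hc j)
      calc |χ ω| * |∏ j, ((z j + S n ω j) ^ (m j) * ((c j).choose (m j) : ℝ))|
          ≤ 1 * (∏ j, ((1 + |z j + S n ω j|) ^ (k - 1) * ((c j).choose (m j) : ℝ))) := by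
            refine mul_le_mul h2 h3 (abs_nonneg _) zero_le_one
        _ = _ := one_mul _
    refine h1.trans (le_of_eq ?_)
    rw [Finset.prod_mul_distrib, mul_comm]
  -- the factorization for each multi-index
  have hfact := fun (m : Fin k → ℕ) (hm : ∀ j, m j ≤ c j) =>
    integral_mul_prod_xi μ ξ ξ₀ hmeas₀ hmeas hindep hident n (gm m) (hblk_gm m)
      (hint_gm m hm) (fun j => c j - m j)
      (fun j => hmomInt _ (le_trans (Nat.sub_le _ _) (hc j)))
  -- pointwise binomial expansion
  have hexp : ∀ ω, χ ω * ∏ j, (z j + S n ω j + ξ n j ω) ^ (c j)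
      = ∑ m ∈ Pc, gm m ω * ∏ j, ξ n j ω ^ (c j - m j) := by
    intro ω
    have hbin : ∀ j : Fin k, (z j + S n ω j + ξ n j ω) ^ (c j)
        = ∑ m ∈ Finset.range (c j + 1),
            (z j + S n ω j) ^ m * ξ n j ω ^ (c j - m) * ((c j).choose m : ℝ) := by
      intro j
      exact add_pow (z j + S n ω j) (ξ n j ω) (c j)
    calc χ ω * ∏ j, (z j + S n ω j + ξ n j ω) ^ (c j)
        = χ ω * ∏ j, ∑ m ∈ Finset.range (c j + 1),
            (z j + S n ω j) ^ m * ξ n j ω ^ (c j - m) * ((c j).choose m : ℝ) := by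
          rw [funext hbin]
      _ = χ ω * ∑ m ∈ Pc, ∏ j,
            ((z j + S n ω j) ^ (m j) * ξ n j ω ^ (c j - m j) * ((c j).choose (m j) : ℝ)) := by
          rw [Finset.prod_univ_sum]
      _ = ∑ m ∈ Pc, gm m ω * ∏ j, ξ n j ω ^ (c j - m j) := by
          rw [Finset.mul_sum]
          refine Finset.sum_congr rfl fun m _ => ?_
          rw [hgm]
          have : ∏ j, ((z j + S n ω j) ^ (m j) * ξ n j ω ^ (c j - m j) * ((c j).choose (m j) : ℝ))
              = (∏ j, ((z j + S n ω j) ^ (m j) * ((c j).choose (m j) : ℝ)))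
                * ∏ j, ξ n j ω ^ (c j - m j) := by
            rw [← Finset.prod_mul_distrib]
            exact Finset.prod_congr rfl fun j _ => by ring
          rw [this]
          ring
  -- pointwise Q expansion
  have hexpQ : ∀ ω, χ ω * ∏ j, Qm μ ξ₀ (c j) (z j + S n ω j)
      = ∑ m ∈ Pc, gm m ω * ∏ j, (∫ ω', ξ₀ ω' ^ (c j - m j) ∂μ) := by
    intro ω
    calc χ ω * ∏ j, Qm μ ξ₀ (c j) (z j + S n ω j)
        = χ ω * ∑ m ∈ Pc, ∏ j, ((z j + S n ω j) ^ (m j)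
            * (((c j).choose (m j) : ℝ) * ∫ ω', ξ₀ ω' ^ (c j - m j) ∂μ)) := by
          simp only [Qm]
          rw [Finset.prod_univ_sum]
      _ = ∑ m ∈ Pc, gm m ω * ∏ j, (∫ ω', ξ₀ ω' ^ (c j - m j) ∂μ) := by
          rw [Finset.mul_sum]
          refine Finset.sum_congr rfl fun m _ => ?_
          rw [hgm]
          have : ∏ j, ((z j + S n ω j) ^ (m j)
                * (((c j).choose (m j) : ℝ) * ∫ ω', ξ₀ ω' ^ (c j - m j) ∂μ))
              = (∏ j, ((z j + S n ω j) ^ (m j) * ((c j).choose (m j) : ℝ)))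
                * ∏ j, (∫ ω', ξ₀ ω' ^ (c j - m j) ∂μ) := by
            rw [← Finset.prod_mul_distrib]
            exact Finset.prod_congr rfl fun j _ => by ring
          rw [this]
          ring
  have hintL : Integrable (fun ω => χ ω * ∏ j, (z j + S n ω j + ξ n j ω) ^ (c j)) μ := by
    have : Integrable (fun ω => ∑ m ∈ Pc, gm m ω * ∏ j, ξ n j ω ^ (c j - m j)) μ :=
      integrable_finset_sum _ fun m hm => (hfact m (hmle m hm)).1
    exact this.congr (Filter.Eventually.of_forall fun ω => (hexp ω).symm)
  have hintR : Integrable (fun ω => χ ω * ∏ j, Qm μ ξ₀ (c j) (z j + S n ω j)) μ := by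
    have : Integrable (fun ω => ∑ m ∈ Pc, gm m ω * ∏ j, (∫ ω', ξ₀ ω' ^ (c j - m j) ∂μ)) μ :=
      integrable_finset_sum _ fun m hm => (hint_gm m (hmle m hm)).mul_const _
    exact this.congr (Filter.Eventually.of_forall fun ω => (hexpQ ω).symm)
  refine ⟨hintL, hintR, ?_⟩
  calc ∫ ω, χ ω * ∏ j, (z j + S n ω j + ξ n j ω) ^ (c j) ∂μ
      = ∫ ω, ∑ m ∈ Pc, gm m ω * ∏ j, ξ n j ω ^ (c j - m j) ∂μ :=
        integral_congr_ae (Filter.Eventually.of_forall fun ω => hexp ω)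
    _ = ∑ m ∈ Pc, ∫ ω, gm m ω * ∏ j, ξ n j ω ^ (c j - m j) ∂μ :=
        integral_finset_sum _ fun m hm => (hfact m (hmle m hm)).1
    _ = ∑ m ∈ Pc, (∫ ω, gm m ω ∂μ) * ∏ j, (∫ ω, ξ₀ ω ^ (c j - m j) ∂μ) :=
        Finset.sum_congr rfl fun m hm => (hfact m (hmle m hm)).2
    _ = ∑ m ∈ Pc, ∫ ω, gm m ω * ∏ j, (∫ ω', ξ₀ ω' ^ (c j - m j) ∂μ) ∂μ :=
        Finset.sum_congr rfl fun m hm => (integral_mul_const _ _).symm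
    _ = ∫ ω, ∑ m ∈ Pc, gm m ω * ∏ j, (∫ ω', ξ₀ ω' ^ (c j - m j) ∂μ) ∂μ :=
        (integral_finset_sum _ fun m hm => (hint_gm m (hmle m hm)).mul_const _).symm
    _ = ∫ ω, χ ω * ∏ j, Qm μ ξ₀ (c j) (z j + S n ω j) ∂μ :=
        integral_congr_ae (Filter.Eventually.of_forall fun ω => (hexpQ ω).symm)

lemma step_lemma (hmeas₀ : Measurable ξ₀) (hmeas : ∀ i j, Measurable (ξ i j))
    (hindep : iIndepFun (fun p : ℕ × Fin k => ξ p.1 p.2) μ)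
    (hident : ∀ i j, IdentDistrib (ξ i j) ξ₀ μ μ)
    (hS : ∀ n ω j, S n ω j = ∑ i ∈ Finset.range n, ξ i j ω)
    (hk : 3 ≤ k) (hmom : ∃ α : ℝ, 2 < α ∧ (k : ℝ) - 1 ≤ α ∧ Integrable (fun ω => |ξ₀ ω| ^ α) μ)
    (z : Fin k → ℝ) (n : ℕ) (χ : Ω → ℝ)
    (hχblk : blk ξ (Finset.range n ×ˢ Finset.univ) χ) (hχ1 : ∀ ω, |χ ω| ≤ 1) :
    ∫ ω, χ ω * vdm k (fun j => z j + S (n + 1) ω j) ∂μ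
      = ∫ ω, χ ω * vdm k (fun j => z j + S n ω j) ∂μ := by
  classical
  have hM0 : (∫ ω, ξ₀ ω ^ 0 ∂μ) = 1 := by simp
  have hPex : ∀ c : ℕ, ∃ P : Polynomial ℝ, P.Monic ∧ P.natDegree = c ∧
      ∀ t : ℝ, P.eval t = Qm μ ξ₀ c t := by
    intro c
    obtain ⟨P, h1, h2, h3⟩ := monic_mom_poly (fun e => ∫ ω, ξ₀ ω ^ e ∂μ) hM0 c
    exact ⟨P, h1, h2, fun t => h3 t⟩
  choose P hPmonic hPdeg hPeval using hPex
  have hSsucc : ∀ ω (j : Fin k), z j + S (n + 1) ω j = z j + S n ω j + ξ n j ω := by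
    intro ω j
    rw [hS, hS, Finset.sum_range_succ]
    ring
  have hcbound : ∀ (σ : Equiv.Perm (Fin k)) (j : Fin k), ((σ⁻¹ j : Fin k) : ℕ) ≤ k - 1 := by
    intro σ j
    have := (σ⁻¹ j).isLt
    omega
  have hA := fun (σ : Equiv.Perm (Fin k)) =>
    claimA μ ξ ξ₀ S hmeas₀ hmeas hindep hident hS hk hmom z n χ hχblk hχ1
      (fun j => ((σ⁻¹ j : Fin k) : ℕ)) (hcbound σ)
  -- pointwise expansion of the left side
  have hexpL : ∀ ω, χ ω * vdm k (fun j => z j + S (n + 1) ω j)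
      = ∑ σ : Equiv.Perm (Fin k), ((Equiv.Perm.sign σ : ℤ) : ℝ)
          * (χ ω * ∏ j, (z j + S n ω j + ξ n j ω) ^ ((σ⁻¹ j : Fin k) : ℕ)) := by
    intro ω
    rw [vdm_eq_det, Matrix.det_apply']
    rw [Finset.mul_sum]
    refine Finset.sum_congr rfl fun σ _ => ?_
    have hre : ∏ i, Matrix.vandermonde (fun j => z j + S (n + 1) ω j) (σ i) i
        = ∏ j, (z j + S n ω j + ξ n j ω) ^ ((σ⁻¹ j : Fin k) : ℕ) := by
      have := Equiv.prod_comp σ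
        (fun j => (z j + S n ω j + ξ n j ω) ^ ((σ⁻¹ j : Fin k) : ℕ))
      rw [← this]
      refine Finset.prod_congr rfl fun i _ => ?_
      rw [Matrix.vandermonde_apply, Equiv.Perm.coe_inv, Equiv.symm_apply_apply, hSsucc]
    rw [hre]
    ring
  -- pointwise expansion of the right side
  have hexpR : ∀ ω, χ ω * vdm k (fun j => z j + S n ω j)
      = ∑ σ : Equiv.Perm (Fin k), ((Equiv.Perm.sign σ : ℤ) : ℝ)
          * (χ ω * ∏ j, Qm μ ξ₀ ((σ⁻¹ j : Fin k) : ℕ) (z j + S n ω j)) := by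
    intro ω
    have hdet : vdm k (fun j => z j + S n ω j)
        = (Matrix.of fun (a b : Fin k) => (P (b : ℕ)).eval (z a + S n ω a)).det := by
      rw [vdm_eq_det]
      rw [Matrix.det_eval_matrixOfPolynomials_eq_det_vandermonde
        (fun j => z j + S n ω j) (fun b => P (b : ℕ))
        (fun b => hPdeg (b : ℕ)) (fun b => hPmonic (b : ℕ))]
    rw [hdet, Matrix.det_apply', Finset.mul_sum]
    refine Finset.sum_congr rfl fun σ _ => ?_
    have hre : ∏ i, (Matrix.of fun (a b : Fin k) => (P (b : ℕ)).eval (z a + S n ω a)) (σ i) i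
        = ∏ j, Qm μ ξ₀ ((σ⁻¹ j : Fin k) : ℕ) (z j + S n ω j) := by
      have := Equiv.prod_comp σ
        (fun j => Qm μ ξ₀ ((σ⁻¹ j : Fin k) : ℕ) (z j + S n ω j))
      rw [← this]
      refine Finset.prod_congr rfl fun i _ => ?_
      rw [Matrix.of_apply, Equiv.Perm.coe_inv, Equiv.symm_apply_apply, hPeval]
    rw [hre]
    ring
  calc ∫ ω, χ ω * vdm k (fun j => z j + S (n + 1) ω j) ∂μ
      = ∫ ω, ∑ σ : Equiv.Perm (Fin k), ((Equiv.Perm.sign σ : ℤ) : ℝ)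
          * (χ ω * ∏ j, (z j + S n ω j + ξ n j ω) ^ ((σ⁻¹ j : Fin k) : ℕ)) ∂μ :=
        integral_congr_ae (Filter.Eventually.of_forall fun ω => hexpL ω)
    _ = ∑ σ : Equiv.Perm (Fin k), ((Equiv.Perm.sign σ : ℤ) : ℝ)
          * ∫ ω, χ ω * ∏ j, (z j + S n ω j + ξ n j ω) ^ ((σ⁻¹ j : Fin k) : ℕ) ∂μ := by
        rw [integral_finset_sum _ fun σ _ => ((hA σ).1.const_mul _)]
        exact Finset.sum_congr rfl fun σ _ => integral_const_mul _ _
    _ = ∑ σ : Equiv.Perm (Fin k), ((Equiv.Perm.sign σ : ℤ) : ℝ)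
          * ∫ ω, χ ω * ∏ j, Qm μ ξ₀ ((σ⁻¹ j : Fin k) : ℕ) (z j + S n ω j) ∂μ :=
        Finset.sum_congr rfl fun σ _ => by rw [(hA σ).2.2]
    _ = ∫ ω, ∑ σ : Equiv.Perm (Fin k), ((Equiv.Perm.sign σ : ℤ) : ℝ)
          * (χ ω * ∏ j, Qm μ ξ₀ ((σ⁻¹ j : Fin k) : ℕ) (z j + S n ω j)) ∂μ := by
        rw [integral_finset_sum _ fun σ _ => ((hA σ).2.1.const_mul _)]
        exact Finset.sum_congr rfl fun σ _ => (integral_const_mul _ _).symm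
    _ = ∫ ω, χ ω * vdm k (fun j => z j + S n ω j) ∂μ :=
        integral_congr_ae (Filter.Eventually.of_forall fun ω => (hexpR ω).symm)

lemma chiA_blk (hS : ∀ n ω j, S n ω j = ∑ i ∈ Finset.range n, ξ i j ω)
    (z : Fin k → ℝ) (n : ℕ) :
    blk ξ (Finset.range n ×ˢ Finset.univ)
      (Set.indicator {ω | ∀ m, 1 ≤ m → m ≤ n → (fun j => z j + S m ω j) ∈ weyl k}
        (fun _ => (1:ℝ))) := by
  classical
  set E : Set (ℕ → Fin k → ℝ) :=
    {u | ∀ m, 1 ≤ m → m ≤ n → (fun j => z j + ∑ i ∈ Finset.range m, u i j) ∈ weyl k} with hE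
  have hEmeas : MeasurableSet E := by
    have : E = ⋂ m : ℕ, {u : ℕ → Fin k → ℝ |
        1 ≤ m → m ≤ n → (fun j => z j + ∑ i ∈ Finset.range m, u i j) ∈ weyl k} := by
      ext u; simp [hE, Set.mem_iInter]
    rw [this]
    refine MeasurableSet.iInter fun m => ?_
    by_cases h1 : 1 ≤ m ∧ m ≤ n
    · have he : {u : ℕ → Fin k → ℝ |
          1 ≤ m → m ≤ n → (fun j => z j + ∑ i ∈ Finset.range m, u i j) ∈ weyl k}
          = (fun u : ℕ → Fin k → ℝ => (fun j => z j + ∑ i ∈ Finset.range m, u i j)) ⁻¹'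
              (weyl k) := by
        ext u; simp [h1.1, h1.2]
      rw [he]
      refine (measurableSet_weyl k).preimage ?_
      refine measurable_pi_lambda _ fun j => ?_
      exact measurable_const.add
        (Finset.measurable_sum _ fun i _ => (measurable_pi_apply j).comp (measurable_pi_apply i))
    · have he : {u : ℕ → Fin k → ℝ |
          1 ≤ m → m ≤ n → (fun j => z j + ∑ i ∈ Finset.range m, u i j) ∈ weyl k}
          = Set.univ := by
        ext u
        simp only [Set.mem_setOf_eq, Set.mem_univ, iff_true]
        intro hm1 hm2
        exact absurd ⟨hm1, hm2⟩ h1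
      rw [he]
      exact MeasurableSet.univ
  have hb := blk_of ξ (Finset.range n ×ˢ Finset.univ) (E.indicator (fun _ => (1:ℝ)))
    (measurable_const.indicator hEmeas)
    (by
      intro u u' hcoord
      have hmem : u ∈ E ↔ u' ∈ E := by
        constructor <;> intro hu m hm1 hm2 <;>
        · have hsum : ∀ j, ∑ i ∈ Finset.range m, u i j = ∑ i ∈ Finset.range m, u' i j :=
            fun j => Finset.sum_congr rfl fun i hi => hcoord (i, j)
              (Finset.mem_product.mpr ⟨Finset.mem_range.mpr
                (lt_of_lt_of_le (Finset.mem_range.mp hi) hm2), Finset.mem_univ j⟩)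
          have := hu m hm1 hm2
          first
          | · have heq : (fun j => z j + ∑ i ∈ Finset.range m, u' i j)
                = (fun j => z j + ∑ i ∈ Finset.range m, u i j) := by
                funext j; rw [hsum j]
              rw [heq]; exact this
          | · have heq : (fun j => z j + ∑ i ∈ Finset.range m, u i j)
                = (fun j => z j + ∑ i ∈ Finset.range m, u' i j) := by
                funext j; rw [hsum j]
              rw [heq]; exact this
      simp only [Set.indicator_apply]
      by_cases hu : u ∈ E
      · rw [if_pos hu, if_pos (hmem.mp hu)]
      · rw [if_neg hu, if_neg (fun h => hu (hmem.mpr h))])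
  have heq : Set.indicator {ω | ∀ m, 1 ≤ m → m ≤ n → (fun j => z j + S m ω j) ∈ weyl k}
        (fun _ => (1:ℝ))
      = fun ω => E.indicator (fun _ => (1:ℝ)) (fun i j => ξ i j ω) := by
    funext ω
    have hmem : (ω ∈ {ω | ∀ m, 1 ≤ m → m ≤ n → (fun j => z j + S m ω j) ∈ weyl k})
        ↔ ((fun i j => ξ i j ω) ∈ E) := by
      have hsum : ∀ m (j : Fin k), S m ω j = ∑ i ∈ Finset.range m, ξ i j ω := fun m j => hS m ω j
      constructor <;> intro hu m hm1 hm2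
      · have := hu m hm1 hm2
        have heq2 : (fun j => z j + ∑ i ∈ Finset.range m, ξ i j ω)
            = (fun j => z j + S m ω j) := by
          funext j; rw [hsum m j]
        show (fun j => z j + ∑ i ∈ Finset.range m, ξ i j ω) ∈ weyl k
        rw [heq2]
        exact this
      · have := hu m hm1 hm2
        have heq2 : (fun j => z j + S m ω j)
            = (fun j => z j + ∑ i ∈ Finset.range m, ξ i j ω) := by
          funext j; rw [hsum m j]
        rw [heq2]
        exact this
    simp only [Set.indicator_apply]
    by_cases hu : ω ∈ {ω | ∀ m, 1 ≤ m → m ≤ n → (fun j => z j + S m ω j) ∈ weyl k}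
    · rw [if_pos hu, if_pos (hmem.mp hu)]
    · rw [if_neg hu, if_neg (fun h => hu (hmem.mpr h))]
  rw [heq]
  exact hb

lemma key_decomp (hmeas₀ : Measurable ξ₀) (hmeas : ∀ i j, Measurable (ξ i j))
    (hindep : iIndepFun (fun p : ℕ × Fin k => ξ p.1 p.2) μ)
    (hident : ∀ i j, IdentDistrib (ξ i j) ξ₀ μ μ)
    (hS : ∀ n ω j, S n ω j = ∑ i ∈ Finset.range n, ξ i j ω)
    (hSmeas : ∀ n, StronglyMeasurable (S n))
    (hk : 3 ≤ k) (hmom : ∃ α : ℝ, 2 < α ∧ (k : ℝ) - 1 ≤ α ∧ Integrable (fun ω => |ξ₀ ω| ^ α) μ)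
    (z : Fin k → ℝ) (τ : Ω → ℕ) (hτmeas : Measurable τ)
    (hτ : ∀ᵐ ω ∂μ, 1 ≤ τ ω ∧ (fun j => z j + S (τ ω) ω j) ∉ weyl k ∧
        ∀ m : ℕ, 1 ≤ m → m < τ ω → (fun j => z j + S m ω j) ∈ weyl k)
    (hintz : Integrable (fun ω => vdm k (fun j => z j + S (τ ω) ω j)) μ) (n : ℕ) :
    vdm k z - ∫ ω, vdm k (fun j => z j + S (τ ω) ω j) ∂μ
      = ∫ ω, Set.indicator {ω' | n < τ ω'} (fun ω' => vdm k (fun j => z j + S n ω' j)) ω ∂μ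
        - ∫ ω, Set.indicator {ω' | n < τ ω'}
            (fun ω' => vdm k (fun j => z j + S (τ ω') ω' j)) ω ∂μ := by
  classical
  have hS0 : ∀ ω (j : Fin k), S 0 ω j = 0 := fun ω j => by rw [hS]; simp
  have hIv : ∀ l : ℕ, Integrable (fun ω => vdm k (fun j => z j + S l ω j)) μ := fun l =>
    vdm_int μ ξ ξ₀ S hmeas₀ hmeas hindep hident hS hSmeas hk hmom z l
  have hmset : ∀ m : ℕ, MeasurableSet {ω | m < τ ω} := fun m =>
    hτmeas (measurableSet_Ioi : MeasurableSet (Set.Ioi m))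
  have hmset2 : ∀ l m : ℕ, MeasurableSet {ω | min (τ ω) m = l} := fun l m =>
    (hτmeas.min measurable_const) (measurableSet_singleton l)
  have hstop_int : ∀ m : ℕ,
      Integrable (fun ω => vdm k (fun j => z j + S (min (τ ω) m) ω j)) μ := by
    intro m
    have hpt : ∀ ω, vdm k (fun j => z j + S (min (τ ω) m) ω j)
        = ∑ l ∈ Finset.range (m + 1), Set.indicator {ω' | min (τ ω') m = l}
            (fun ω' => vdm k (fun j => z j + S l ω' j)) ω := by
      intro ω
      rw [Finset.sum_eq_single_of_mem (min (τ ω) m)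
        (Finset.mem_range.mpr (by omega))]
      · rw [Set.indicator_of_mem (by exact rfl)]
      · intro l _ hne
        exact Set.indicator_of_notMem (fun h => hne (by simpa using h.symm)) _
    have hsum : Integrable (fun ω => ∑ l ∈ Finset.range (m + 1),
        Set.indicator {ω' | min (τ ω') m = l}
          (fun ω' => vdm k (fun j => z j + S l ω' j)) ω) μ :=
      integrable_finset_sum _ fun l _ => (hIv l).indicator (hmset2 l m)
    exact hsum.congr (Filter.Eventually.of_forall fun ω => (hpt ω).symm)
  -- the optional stopping identity
  have hD : ∀ m : ℕ, ∫ ω, vdm k (fun j => z j + S (min (τ ω) m) ω j) ∂μ = vdm k z := by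
    intro m
    induction m with
    | zero =>
      have : ∀ ω, vdm k (fun j => z j + S (min (τ ω) 0) ω j) = vdm k z := by
        intro ω
        have : (fun j => z j + S (min (τ ω) 0) ω j) = z := by
          funext j
          rw [Nat.min_zero, hS0, add_zero]
        rw [this]
      rw [integral_congr_ae (Filter.Eventually.of_forall this)]
      simp
    | succ m ih =>
      set A := {ω | ∀ mm, 1 ≤ mm → mm ≤ m → (fun j => z j + S mm ω j) ∈ weyl k} with hA
      set χ : Ω → ℝ := Set.indicator A (fun _ => (1:ℝ)) with hχ
      have hχblk : blk ξ (Finset.range m ×ˢ Finset.univ) χ := chiA_blk ξ S hS z m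
      have hχ1 : ∀ ω, |χ ω| ≤ 1 := by
        intro ω
        rw [hχ, Set.indicator_apply]
        by_cases h : ω ∈ A <;> simp [h]
      have hstep := step_lemma μ ξ ξ₀ S hmeas₀ hmeas hindep hident hS hk hmom z m χ hχblk hχ1
      have hIχ : ∀ l : ℕ, Integrable (fun ω => χ ω * vdm k (fun j => z j + S l ω j)) μ := by
        intro l
        refine Integrable.mono' ((hIv l).abs) ?_ (Filter.Eventually.of_forall fun ω => ?_)
        · refine (AEStronglyMeasurable.mul ?_ (vdm_meas S hSmeas z l).aestronglyMeasurable)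
          exact (hχblk.measurable hmeas).aestronglyMeasurable
        · rw [Real.norm_eq_abs, abs_mul]
          calc |χ ω| * |vdm k (fun j => z j + S l ω j)|
              ≤ 1 * |vdm k (fun j => z j + S l ω j)| :=
                mul_le_mul_of_nonneg_right (hχ1 ω) (abs_nonneg _)
            _ = |vdm k (fun j => z j + S l ω j)| := one_mul _
      -- pointwise difference identity
      have hpt : ∀ ω, vdm k (fun j => z j + S (min (τ ω) (m + 1)) ω j)
          - vdm k (fun j => z j + S (min (τ ω) m) ω j)
          = Set.indicator {ω' | m < τ ω'} (fun _ => (1:ℝ)) ω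
            * (vdm k (fun j => z j + S (m + 1) ω j) - vdm k (fun j => z j + S m ω j)) := by
        intro ω
        by_cases h : m < τ ω
        · have h1 : min (τ ω) (m + 1) = m + 1 := by omega
          have h2 : min (τ ω) m = m := by omega
          rw [h1, h2, Set.indicator_of_mem (by exact h), one_mul]
        · have h1 : min (τ ω) (m + 1) = τ ω := by omega
          have h2 : min (τ ω) m = τ ω := by omega
          rw [h1, h2, Set.indicator_of_notMem (by exact h), sub_self, zero_mul]
      -- a.e. equality of the two indicators
      have hae : (fun ω => Set.indicator {ω' | m < τ ω'} (fun _ => (1:ℝ)) ω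
            * (vdm k (fun j => z j + S (m + 1) ω j) - vdm k (fun j => z j + S m ω j)))
          =ᵐ[μ] (fun ω => χ ω
            * (vdm k (fun j => z j + S (m + 1) ω j) - vdm k (fun j => z j + S m ω j))) := by
        filter_upwards [hτ] with ω hω
        have hiff : (m < τ ω) ↔ ω ∈ A := by
          constructor
          · intro h mm h1 h2
            exact hω.2.2 mm h1 (lt_of_le_of_lt h2 h)
          · intro hu
            by_contra h'
            push_neg at h'
            exact hω.2.1 (hu (τ ω) hω.1 h')
        congr 1
        rw [hχ, Set.indicator_apply, Set.indicator_apply]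
        by_cases h : m < τ ω
        · rw [if_pos (by exact h), if_pos (hiff.mp h)]
        · rw [if_neg (by exact h), if_neg (fun hh => h (hiff.mpr hh))]
      have hzero : ∫ ω, vdm k (fun j => z j + S (min (τ ω) (m + 1)) ω j) ∂μ
          - ∫ ω, vdm k (fun j => z j + S (min (τ ω) m) ω j) ∂μ = 0 := by
        rw [← integral_sub (hstop_int (m + 1)) (hstop_int m)]
        rw [integral_congr_ae (Filter.Eventually.of_forall hpt)]
        rw [integral_congr_ae hae]
        have : ∀ ω, χ ω * (vdm k (fun j => z j + S (m + 1) ω j)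
              - vdm k (fun j => z j + S m ω j))
            = χ ω * vdm k (fun j => z j + S (m + 1) ω j)
              - χ ω * vdm k (fun j => z j + S m ω j) := fun ω => by ring
        rw [integral_congr_ae (Filter.Eventually.of_forall this)]
        rw [integral_sub (hIχ (m + 1)) (hIχ m)]
        rw [hstep]
        ring
      linarith [hzero, ih]
  -- split the stopped integral at time n
  have hsplit : ∀ ω, vdm k (fun j => z j + S (min (τ ω) n) ω j)
      = Set.indicator {ω' | n < τ ω'} (fun ω' => vdm k (fun j => z j + S n ω' j)) ω
        + (vdm k (fun j => z j + S (τ ω) ω j)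
          - Set.indicator {ω' | n < τ ω'}
              (fun ω' => vdm k (fun j => z j + S (τ ω') ω' j)) ω) := by
    intro ω
    by_cases h : n < τ ω
    · have h1 : min (τ ω) n = n := by omega
      rw [h1, Set.indicator_of_mem (by exact h), Set.indicator_of_mem (by exact h)]
      ring
    · have h1 : min (τ ω) n = τ ω := by omega
      rw [h1, Set.indicator_of_notMem (by exact h), Set.indicator_of_notMem (by exact h)]
      ring
  have hI1 : Integrable (fun ω => Set.indicator {ω' | n < τ ω'}
      (fun ω' => vdm k (fun j => z j + S n ω' j)) ω) μ := (hIv n).indicator (hmset n)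
  have hI2 : Integrable (fun ω => Set.indicator {ω' | n < τ ω'}
      (fun ω' => vdm k (fun j => z j + S (τ ω') ω' j)) ω) μ := hintz.indicator (hmset n)
  have hfinal := hD n
  rw [integral_congr_ae (Filter.Eventually.of_forall hsplit)] at hfinal
  have e1 : ∫ ω, (Set.indicator {ω' | n < τ ω'}
        (fun ω' => vdm k (fun j => z j + S n ω' j)) ω
      + (vdm k (fun j => z j + S (τ ω) ω j)
        - Set.indicator {ω' | n < τ ω'}
            (fun ω' => vdm k (fun j => z j + S (τ ω') ω' j)) ω)) ∂μ
      = ∫ ω, Set.indicator {ω' | n < τ ω'}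
            (fun ω' => vdm k (fun j => z j + S n ω' j)) ω ∂μ
        + ∫ ω, (vdm k (fun j => z j + S (τ ω) ω j)
            - Set.indicator {ω' | n < τ ω'}
                (fun ω' => vdm k (fun j => z j + S (τ ω') ω' j)) ω) ∂μ :=
    integral_add hI1 (hintz.sub hI2)
  have e2 : ∫ ω, (vdm k (fun j => z j + S (τ ω) ω j)
        - Set.indicator {ω' | n < τ ω'}
            (fun ω' => vdm k (fun j => z j + S (τ ω') ω' j)) ω) ∂μ
      = ∫ ω, vdm k (fun j => z j + S (τ ω) ω j) ∂μ
        - ∫ ω, Set.indicator {ω' | n < τ ω'}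
            (fun ω' => vdm k (fun j => z j + S (τ ω') ω' j)) ω ∂μ :=
    integral_sub hintz hI2
  rw [e1, e2] at hfinal
  linarith [hfinal]

end Main

/-- V is monotone in the gaps: if all consecutive gaps of x are
dominated by those of y, then V(x) ≤ V(y), where V(z) = Δ(z) − E[Δ(z+S_{τ_z})]. -/
theorem V_monotone
    (k : ℕ) {Ω : Type} [MeasurableSpace Ω] (μ : Measure Ω) [IsProbabilityMeasure μ]
    (ξ : ℕ → Fin k → Ω → ℝ) (ξ₀ : Ω → ℝ) (hmeas₀ : Measurable ξ₀)
    (hmeas : ∀ i j, Measurable (ξ i j))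
    (hindep : iIndepFun (fun p : ℕ × Fin k => ξ p.1 p.2) μ)
    (hident : ∀ i j, IdentDistrib (ξ i j) ξ₀ μ μ)
    (hmean : ∫ ω, ξ₀ ω ∂μ = 0)
    (S : ℕ → Ω → Fin k → ℝ)
    (hS : ∀ n ω j, S n ω j = ∑ i ∈ Finset.range n, ξ i j ω)
    (hSmeas : ∀ n, StronglyMeasurable (S n))
    (hk : 3 ≤ k)
    (hvar : ∫ ω, (ξ₀ ω) ^ 2 ∂μ = 1)
    (hmom : ∃ α : ℝ, 2 < α ∧ (k : ℝ) - 1 ≤ α ∧ Integrable (fun ω => |ξ₀ ω| ^ α) μ)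
    (x y : Fin k → ℝ) (hx : x ∈ weyl k) (hy : y ∈ weyl k)
    (hgap : ∀ j : Fin k, ∀ h : (j : ℕ) + 1 < k,
        x ⟨(j : ℕ) + 1, h⟩ - x j ≤ y ⟨(j : ℕ) + 1, h⟩ - y j)
    (τx τy : Ω → ℕ) (hτxmeas : Measurable τx) (hτymeas : Measurable τy)
    (hτx : ∀ᵐ ω ∂μ, 1 ≤ τx ω ∧ (fun j => x j + S (τx ω) ω j) ∉ weyl k ∧
        ∀ m : ℕ, 1 ≤ m → m < τx ω → (fun j => x j + S m ω j) ∈ weyl k)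
    (hτy : ∀ᵐ ω ∂μ, 1 ≤ τy ω ∧ (fun j => y j + S (τy ω) ω j) ∉ weyl k ∧
        ∀ m : ℕ, 1 ≤ m → m < τy ω → (fun j => y j + S m ω j) ∈ weyl k)
    (hintx : Integrable (fun ω => vdm k (fun j => x j + S (τx ω) ω j)) μ)
    (hinty : Integrable (fun ω => vdm k (fun j => y j + S (τy ω) ω j)) μ) :
    vdm k x - ∫ ω, vdm k (fun j => x j + S (τx ω) ω j) ∂μ
      ≤ vdm k y - ∫ ω, vdm k (fun j => y j + S (τy ω) ω j) ∂μ := by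
  classical
  have hS0 : ∀ ω (j : Fin k), S 0 ω j = 0 := fun ω j => by rw [hS]; simp
  have hIvx : ∀ l : ℕ, Integrable (fun ω => vdm k (fun j => x j + S l ω j)) μ := fun l =>
    vdm_int μ ξ ξ₀ S hmeas₀ hmeas hindep hident hS hSmeas hk hmom x l
  have hIvy : ∀ l : ℕ, Integrable (fun ω => vdm k (fun j => y j + S l ω j)) μ := fun l =>
    vdm_int μ ξ ξ₀ S hmeas₀ hmeas hindep hident hS hSmeas hk hmom y l
  have hmsetx : ∀ m : ℕ, MeasurableSet {ω | m < τx ω} := fun m =>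
    hτxmeas (measurableSet_Ioi : MeasurableSet (Set.Ioi m))
  have hmsety : ∀ m : ℕ, MeasurableSet {ω | m < τy ω} := fun m =>
    hτymeas (measurableSet_Ioi : MeasurableSet (Set.Ioi m))
  -- the two decompositions
  have hdx := key_decomp μ ξ ξ₀ S hmeas₀ hmeas hindep hident hS hSmeas hk hmom x τx
    hτxmeas hτx hintx
  have hdy := key_decomp μ ξ ξ₀ S hmeas₀ hmeas hindep hident hS hSmeas hk hmom y τy
    hτymeas hτy hinty
  -- remainder terms tend to zero
  have hrem : ∀ (z : Fin k → ℝ) (τ : Ω → ℕ),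
      (∀ m : ℕ, MeasurableSet {ω | m < τ ω}) →
      (hintz : Integrable (fun ω => vdm k (fun j => z j + S (τ ω) ω j)) μ) →
      Tendsto (fun n => ∫ ω, Set.indicator {ω' | n < τ ω'}
        (fun ω' => vdm k (fun j => z j + S (τ ω') ω' j)) ω ∂μ) atTop (nhds 0) := by
    intro z τ hms hintz
    have h0 : (0:ℝ) = ∫ _ω, (0:ℝ) ∂μ := by simp
    rw [h0]
    refine tendsto_integral_of_dominated_convergence
      (fun ω => |vdm k (fun j => z j + S (τ ω) ω j)|)
      (fun n => hintz.1.indicator (hms n)) hintz.abs (fun n => ?_) ?_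
    · refine Filter.Eventually.of_forall fun ω => ?_
      rw [Real.norm_eq_abs]
      by_cases h : n < τ ω
      · rw [Set.indicator_of_mem (by exact h)]
      · rw [Set.indicator_of_notMem (by exact h)]
        simp [abs_nonneg]
    · refine Filter.Eventually.of_forall fun ω => ?_
      have hev : (fun n => Set.indicator {ω' | n < τ ω'}
            (fun ω' => vdm k (fun j => z j + S (τ ω') ω' j)) ω) =ᶠ[atTop]
          (fun _ => (0:ℝ)) := by
        rw [Filter.eventuallyEq_iff_exists_mem]
        refine ⟨Set.Ici (τ ω), Filter.mem_atTop _, fun n hn => ?_⟩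
        exact Set.indicator_of_notMem (by simp only [Set.mem_setOf_eq]; exact not_lt.mpr (Set.mem_Ici.mp hn)) _
      exact Filter.Tendsto.congr' hev.symm tendsto_const_nhds
  have hRx := hrem x τx hmsetx hintx
  have hRy := hrem y τy hmsety hinty
  -- comparison of the main terms
  have hcomp : ∀ n : ℕ, ∫ ω, Set.indicator {ω' | n < τx ω'}
        (fun ω' => vdm k (fun j => x j + S n ω' j)) ω ∂μ
      ≤ ∫ ω, Set.indicator {ω' | n < τy ω'}
        (fun ω' => vdm k (fun j => y j + S n ω' j)) ω ∂μ := by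
    intro n
    refine integral_mono_ae ((hIvx n).indicator (hmsetx n)) ((hIvy n).indicator (hmsety n)) ?_
    filter_upwards [hτx, hτy] with ω hωx hωy
    have hgapS : ∀ m : ℕ, ∀ (j : Fin k) (h : (j : ℕ) + 1 < k),
        (fun j' => x j' + S m ω j') ⟨(j : ℕ) + 1, h⟩ - (fun j' => x j' + S m ω j') j
          ≤ (fun j' => y j' + S m ω j') ⟨(j : ℕ) + 1, h⟩ - (fun j' => y j' + S m ω j') j := by
      intro m j h
      have := hgap j h
      simp only
      linarith
    have hxW : ∀ m : ℕ, m < τx ω → (fun j => x j + S m ω j) ∈ weyl k := by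
      intro m hm
      rcases Nat.eq_zero_or_pos m with h0 | h1
      · subst h0
        have : (fun j => x j + S 0 ω j) = x := funext fun j => by rw [hS0, add_zero]
        rw [this]
        exact hx
      · exact hωx.2.2 m h1 hm
    have hyW : ∀ m : ℕ, m < τy ω → (fun j => y j + S m ω j) ∈ weyl k := by
      intro m hm
      rcases Nat.eq_zero_or_pos m with h0 | h1
      · subst h0
        have : (fun j => y j + S 0 ω j) = y := funext fun j => by rw [hS0, add_zero]
        rw [this]
        exact hy
      · exact hωy.2.2 m h1 hm
    by_cases hn : n < τx ω
    · have hxWn := hxW n hn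
      have hyWn : (fun j => y j + S n ω j) ∈ weyl k := weyl_of_gaps hxWn (hgapS n)
      have hτyn : n < τy ω := by
        by_contra h'
        push_neg at h'
        have h1 : 1 ≤ τy ω := hωy.1
        have hxm : (fun j => x j + S (τy ω) ω j) ∈ weyl k :=
          hxW (τy ω) (lt_of_le_of_lt h' hn)
        exact hωy.2.1 (weyl_of_gaps hxm (hgapS (τy ω)))
      rw [Set.indicator_of_mem (by exact hn), Set.indicator_of_mem (by exact hτyn)]
      exact vdm_le_of_gaps hxWn (hgapS n)
    · rw [Set.indicator_of_notMem (by exact hn)]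
      by_cases hny : n < τy ω
      · rw [Set.indicator_of_mem (by exact hny)]
        exact le_of_lt (vdm_pos (hyW n hny))
      · rw [Set.indicator_of_notMem (by exact hny)]
  -- assemble
  have hdiff : ∀ n : ℕ,
      (vdm k x - ∫ ω, vdm k (fun j => x j + S (τx ω) ω j) ∂μ)
        - (vdm k y - ∫ ω, vdm k (fun j => y j + S (τy ω) ω j) ∂μ)
      ≤ (∫ ω, Set.indicator {ω' | n < τy ω'}
            (fun ω' => vdm k (fun j => y j + S (τy ω') ω' j)) ω ∂μ)
        - ∫ ω, Set.indicator {ω' | n < τx ω'}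
            (fun ω' => vdm k (fun j => x j + S (τx ω') ω' j)) ω ∂μ := by
    intro n
    have h1 := hdx n
    have h2 := hdy n
    have h3 := hcomp n
    linarith
  have hT : Tendsto (fun n => (∫ ω, Set.indicator {ω' | n < τy ω'}
        (fun ω' => vdm k (fun j => y j + S (τy ω') ω' j)) ω ∂μ)
      - ∫ ω, Set.indicator {ω' | n < τx ω'}
        (fun ω' => vdm k (fun j => x j + S (τx ω') ω' j)) ω ∂μ) atTop (nhds 0) := by
    have := hRy.sub hRx
    simpa using this
  have hfin := ge_of_tendsto hT (Filter.Eventually.of_forall fun n => hdiff n)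
  linarith
end
end

section
/- Exchangeability identity: if S_n is a k-dimensional random walk whose increments, conditioned on a σ-algebra generated by an exchangeable event count Σ_n, remain exchangeable across the n steps, then E[Δ(x + S_n)·Σ_n] = Δ(x)·E[Σ_n], where Σ_n = Σ_{i=1}^n Σ_{j=1}^k 1{|ξ_i^{(j)}| > c}. -/
open MeasureTheory ProbabilityTheory Filter Finset

noncomputable section

open Polynomial Matrix in
lemma aux_coeff_zero_prod {ι : Type*} [DecidableEq ι] (s : Finset ι) (a b : ι → ℝ) :
    (∏ j ∈ s, (C (a j) + X * C (b j))).coeff 0 = ∏ j ∈ s, a j := by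
  induction s using Finset.induction_on with
  | empty => simp
  | @insert j s' hjns ih =>
    rw [Finset.prod_insert hjns, Finset.prod_insert hjns, Polynomial.mul_coeff_zero, ih]
    simp

open Polynomial Matrix in
lemma aux_coeff_one_prod {ι : Type*} [DecidableEq ι] (s : Finset ι) (a b : ι → ℝ) :
    (∏ j ∈ s, (C (a j) + X * C (b j))).coeff 1
      = ∑ j ∈ s, b j * ∏ l ∈ s.erase j, a l := by
  induction s using Finset.induction_on with
  | empty => simp [Polynomial.coeff_one]
  | @insert j s' hjns ih =>
    rw [Finset.prod_insert hjns, add_mul]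
    have h1 : (C (a j) * ∏ l ∈ s', (C (a l) + X * C (b l))).coeff 1
        = a j * (∏ l ∈ s', (C (a l) + X * C (b l))).coeff 1 := by
      rw [Polynomial.coeff_C_mul]
    have h2 : (X * C (b j) * ∏ l ∈ s', (C (a l) + X * C (b l))).coeff 1
        = b j * (∏ l ∈ s', (C (a l) + X * C (b l))).coeff 0 := by
      rw [mul_assoc, Polynomial.coeff_X_mul, Polynomial.coeff_C_mul]
    rw [Polynomial.coeff_add, h1, h2, ih, aux_coeff_zero_prod]
    rw [Finset.sum_insert hjns, Finset.erase_insert hjns, Finset.mul_sum]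
    rw [add_comm]
    congr 1
    apply Finset.sum_congr rfl
    intro l hl
    rw [Finset.erase_insert_of_ne (by rintro rfl; exact hjns hl),
      Finset.prod_insert (fun h => hjns (Finset.erase_subset _ _ h))]
    ring

open Polynomial Matrix in
lemma aux_det_monic_eval {k : ℕ} (x : Fin k → ℝ) (p : Fin k → ℝ[X])
    (hd : ∀ i, (p i).natDegree = (i : ℕ)) (hm : ∀ i, (p i).Monic) :
    (Matrix.of fun i j : Fin k => (p i).eval (x j)).det = (Matrix.vandermonde x).det := by
  rw [Matrix.det_eval_matrixOfPolynomials_eq_det_vandermonde x p hd hm,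
    ← Matrix.det_transpose (Matrix.of fun i j => (p j).eval (x i))]
  rfl

open Polynomial Matrix in
lemma aux_sum_det {k : ℕ} (x : Fin k → ℝ) (α : ℝ) (P D : Fin k → ℝ[X])
    (hPm : ∀ i, (P i).Monic) (hPd : ∀ i, (P i).natDegree = (i : ℕ))
    (hD : ∀ i : Fin k, (D i).degree < ((i : ℕ) : WithBot ℕ)) :
    ∑ j₀ : Fin k, (Matrix.of fun i j : Fin k =>
        (if j = j₀ then C α * P i + D i else P i).eval (x j)).det
      = (k : ℝ) * α * (Matrix.vandermonde x).det := by
  have hdegP : ∀ i : Fin k, (P i).degree = ((i : ℕ) : WithBot ℕ) := fun i => by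
    rw [Polynomial.degree_eq_natDegree (hPm i).ne_zero, hPd i]
  have hlt : ∀ (t : ℝ) (i : Fin k), (C t * D i).degree < (P i).degree := fun t i => by
    rw [← Polynomial.smul_eq_C_mul]
    refine lt_of_le_of_lt (Polynomial.degree_smul_le t (D i)) ?_
    rw [hdegP i]; exact hD i
  have hcm : ∀ (t : ℝ) (i : Fin k), (P i + C t * D i).Monic := fun t i =>
    (hPm i).add_of_left (hlt t i)
  have hcd : ∀ (t : ℝ) (i : Fin k), (P i + C t * D i).natDegree = (i : ℕ) := fun t i => by
    have : (P i + C t * D i).degree = (P i).degree :=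
      Polynomial.degree_add_eq_left_of_degree_lt (hlt t i)
    rw [hdegP i] at this
    exact Polynomial.natDegree_eq_of_degree_eq_some this
  have step1 : ∀ t : ℝ,
      (Matrix.of fun i j : Fin k => (P i + C t * D i).eval (x j)).det
        = (Matrix.vandermonde x).det := fun t =>
    aux_det_monic_eval x _ (hcd t) (hcm t)
  set A : Fin k → Fin k → ℝ := fun i j => (P i).eval (x j) with hA
  set B : Fin k → Fin k → ℝ := fun i j => (D i).eval (x j) with hB
  set F : ℝ[X] := ∑ τ : Equiv.Perm (Fin k), C ((Equiv.Perm.sign τ : ℤ) : ℝ)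
      * ∏ j : Fin k, (C (A (τ j) j) + X * C (B (τ j) j)) with hF
  have hFeval : ∀ t : ℝ, F.eval t = (Matrix.vandermonde x).det := by
    intro t
    rw [← step1 t, Matrix.det_apply']
    rw [hF, Polynomial.eval_finset_sum]
    refine Finset.sum_congr rfl fun τ _ => ?_
    rw [Polynomial.eval_mul, Polynomial.eval_C, Polynomial.eval_prod]
    congr 1
    refine Finset.prod_congr rfl fun j _ => ?_
    simp only [Matrix.of_apply, Polynomial.eval_add, Polynomial.eval_mul, Polynomial.eval_C,
      Polynomial.eval_X, hA, hB]
  have hFC : F = C ((Matrix.vandermonde x).det) :=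
    Polynomial.funext fun t => by rw [hFeval t, Polynomial.eval_C]
  have hcoeff1 : F.coeff 1 = 0 := by rw [hFC, Polynomial.coeff_C]; simp
  have hexp : F.coeff 1 = ∑ τ : Equiv.Perm (Fin k), ((Equiv.Perm.sign τ : ℤ) : ℝ)
      * ∑ j : Fin k, B (τ j) j * ∏ l ∈ Finset.univ.erase j, A (τ l) l := by
    rw [hF, Polynomial.finset_sum_coeff]
    refine Finset.sum_congr rfl fun τ _ => ?_
    rw [Polynomial.coeff_C_mul, aux_coeff_one_prod]
  have hmix : ∀ j₀ : Fin k,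
      (Matrix.of fun i l : Fin k => if l = j₀ then B i l else A i l).det
        = ∑ τ : Equiv.Perm (Fin k), ((Equiv.Perm.sign τ : ℤ) : ℝ)
            * (B (τ j₀) j₀ * ∏ l ∈ Finset.univ.erase j₀, A (τ l) l) := by
    intro j₀
    rw [Matrix.det_apply']
    refine Finset.sum_congr rfl fun τ _ => ?_
    congr 1
    rw [← Finset.mul_prod_erase Finset.univ _ (Finset.mem_univ j₀)]
    simp only [Matrix.of_apply, if_pos rfl]
    congr 1
    refine Finset.prod_congr rfl fun l hl => ?_
    rw [if_neg (Finset.ne_of_mem_erase hl)]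
  have hzero : ∑ j₀ : Fin k,
      (Matrix.of fun i l : Fin k => if l = j₀ then B i l else A i l).det = 0 := by
    rw [← hcoeff1, hexp]
    rw [Finset.sum_congr rfl fun j₀ _ => hmix j₀, Finset.sum_comm]
    refine Finset.sum_congr rfl fun τ _ => ?_
    rw [Finset.mul_sum]
  have hAmat : (Matrix.of fun i j : Fin k => A i j).det = (Matrix.vandermonde x).det :=
    aux_det_monic_eval x P hPd hPm
  have hsplit : ∀ j₀ : Fin k,
      (Matrix.of fun i j : Fin k =>
          (if j = j₀ then C α * P i + D i else P i).eval (x j)).det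
        = α * (Matrix.vandermonde x).det
          + (Matrix.of fun i l : Fin k => if l = j₀ then B i l else A i l).det := by
    intro j₀
    have heq : (Matrix.of fun i j : Fin k =>
          (if j = j₀ then C α * P i + D i else P i).eval (x j))
        = (Matrix.of fun i j : Fin k => A i j).updateCol j₀
            ((fun i => α * A i j₀) + fun i => B i j₀) := by
      ext i j
      rw [Matrix.updateCol_apply]
      by_cases h : j = j₀
      · subst h
        simp [hA, hB, Polynomial.eval_add, Polynomial.eval_mul, Polynomial.eval_C]
      · simp [h, hA]
    have heq2 : (Matrix.of fun i l : Fin k => if l = j₀ then B i l else A i l)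
        = (Matrix.of fun i j : Fin k => A i j).updateCol j₀ (fun i => B i j₀) := by
      ext i j
      rw [Matrix.updateCol_apply]
      by_cases h : j = j₀ <;> simp [h]
    rw [heq, Matrix.det_updateCol_add, heq2]
    congr 1
    have h3 : (fun i => α * A i j₀) = α • (fun i => A i j₀) := by
      funext i; simp
    rw [h3, Matrix.det_updateCol_smul]
    have h4 : (Matrix.of fun i j : Fin k => A i j).updateCol j₀ (fun i => A i j₀)
        = (Matrix.of fun i j : Fin k => A i j) := Matrix.updateCol_eq_self _ j₀
    rw [h4, hAmat]
  rw [Finset.sum_congr rfl fun j₀ _ => hsplit j₀, Finset.sum_add_distrib, hzero, add_zero,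
    Finset.sum_const, Finset.card_univ, Fintype.card_fin, nsmul_eq_mul]
  ring

open Matrix in
lemma aux_vdm_det (k : ℕ) (v : Fin k → ℝ) : vdm k v = (Matrix.vandermonde v).det := by
  rw [Matrix.det_vandermonde, vdm, Finset.prod_sigma']
  refine Finset.prod_nbij' (fun p => ⟨p.1, p.2⟩) (fun p => (p.1, p.2)) ?_ ?_ ?_ ?_ ?_
  · rintro ⟨i, j⟩ h
    simp only [pairs, Finset.mem_filter, Finset.mem_univ, true_and] at h
    simp [Finset.mem_sigma, Finset.mem_Ioi, h]
  · rintro ⟨i, j⟩ h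
    simp only [Finset.mem_sigma, Finset.mem_univ, Finset.mem_Ioi] at h
    simp [pairs, h]
  · rintro ⟨i, j⟩ _; rfl
  · rintro ⟨i, j⟩ _; rfl
  · rintro ⟨i, j⟩ _; rfl

open Matrix in
lemma aux_vdm_expand (k : ℕ) (v : Fin k → ℝ) :
    vdm k v = ∑ τ : Equiv.Perm (Fin k),
      ((Equiv.Perm.sign τ : ℤ) : ℝ) * ∏ j : Fin k, v j ^ ((τ j : ℕ)) := by
  rw [aux_vdm_det, ← Matrix.det_transpose, Matrix.det_apply']
  refine Finset.sum_congr rfl fun τ _ => ?_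
  rfl

lemma aux_prod_indep {k n : ℕ} {Ω : Type} [MeasurableSpace Ω] (μ : Measure Ω)
    [IsProbabilityMeasure μ]
    (ξ : ℕ → Fin k → Ω → ℝ) (hmeas : ∀ i j, Measurable (ξ i j))
    (hindep : iIndepFun (fun p : ℕ × Fin k => ξ p.1 p.2) μ)
    (g : Fin k → (Fin n → ℝ) → ℝ) (hg : ∀ j, Measurable (g j))
    (hInt : ∀ j, Integrable (fun ω => g j (fun i => ξ (i : ℕ) j ω)) μ) (s : Finset (Fin k)) :
    Integrable (fun ω => ∏ j ∈ s, g j (fun i => ξ (i : ℕ) j ω)) μ ∧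
      ∫ ω, ∏ j ∈ s, g j (fun i => ξ (i : ℕ) j ω) ∂μ
        = ∏ j ∈ s, ∫ ω, g j (fun i => ξ (i : ℕ) j ω) ∂μ := by
  classical
  induction s using Finset.induction_on with
  | empty => simp
  | @insert j s' hjns ih =>
    have hIndepFun : IndepFun (fun ω => g j (fun i => ξ (i : ℕ) j ω))
        (fun ω => ∏ l ∈ s', g l (fun i => ξ (i : ℕ) l ω)) μ := by
      set S : Finset (ℕ × Fin k) := (Finset.range n) ×ˢ ({j} : Finset (Fin k)) with hS
      set T : Finset (ℕ × Fin k) := (Finset.range n) ×ˢ s' with hT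
      have hdisj : Disjoint S T := by
        rw [Finset.disjoint_left]
        rintro ⟨a, b⟩ haS haT
        rw [hS, Finset.mem_product] at haS
        rw [hT, Finset.mem_product] at haT
        rw [Finset.mem_singleton] at haS
        exact hjns (haS.2 ▸ haT.2)
      have base := hindep.indepFun_finset S T hdisj (fun p => hmeas p.1 p.2)
      have hφ : Measurable (fun y : ({p // p ∈ S} → ℝ) =>
          g j (fun i : Fin n => y ⟨((i : ℕ), j),
            Finset.mem_product.2 ⟨Finset.mem_range.2 i.isLt, Finset.mem_singleton_self j⟩⟩)) :=
        (hg j).comp (measurable_pi_lambda _ fun i => measurable_pi_apply _)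
      have hψ : Measurable (fun y : ({p // p ∈ T} → ℝ) =>
          ∏ l ∈ s'.attach, g (l : Fin k) (fun i : Fin n => y ⟨((i : ℕ), (l : Fin k)),
            Finset.mem_product.2 ⟨Finset.mem_range.2 i.isLt, l.2⟩⟩)) := by
        refine Finset.measurable_prod _ fun l _ => ?_
        exact (hg l).comp (measurable_pi_lambda _ fun i => measurable_pi_apply _)
      have := base.comp hφ hψ
      convert this using 1
      · rfl
      · funext ω
        exact (Finset.prod_attach s' fun l => g l (fun i : Fin n => ξ (i : ℕ) l ω)).symm
    constructor
    · rw [show (fun ω => ∏ l ∈ insert j s', g l (fun i => ξ (i : ℕ) l ω))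
          = (fun ω => g j (fun i => ξ (i : ℕ) j ω))
            * (fun ω => ∏ l ∈ s', g l (fun i => ξ (i : ℕ) l ω)) by
        funext ω; simp [Finset.prod_insert hjns]]
      exact hIndepFun.integrable_mul (hInt j) ih.1
    · have heq : ∀ ω, ∏ l ∈ insert j s', g l (fun i => ξ (i : ℕ) l ω)
          = g j (fun i => ξ (i : ℕ) j ω) * ∏ l ∈ s', g l (fun i => ξ (i : ℕ) l ω) :=
        fun ω => Finset.prod_insert hjns
      rw [integral_congr_ae (Filter.EventuallyEq.of_eq (funext heq)),
        Finset.prod_insert hjns, ← ih.2]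
      exact hIndepFun.integral_mul_eq_mul_integral (hInt j).1 ih.1.1

lemma aux_map_col {k n : ℕ} {Ω : Type} [MeasurableSpace Ω] (μ : Measure Ω)
    [IsProbabilityMeasure μ]
    (ξ : ℕ → Fin k → Ω → ℝ) (ξ₀ : Ω → ℝ) (hmeas₀ : Measurable ξ₀)
    (hmeas : ∀ i j, Measurable (ξ i j))
    (hindep : iIndepFun (fun p : ℕ × Fin k => ξ p.1 p.2) μ)
    (hident : ∀ i j, IdentDistrib (ξ i j) ξ₀ μ μ) (j : Fin k) :
    μ.map (fun ω (i : Fin n) => ξ (i : ℕ) j ω)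
      = Measure.pi (fun _ : Fin n => μ.map ξ₀) := by
  classical
  have hV : Measurable (fun ω (i : Fin n) => ξ (i : ℕ) j ω) :=
    measurable_pi_lambda _ fun i => hmeas i j
  have : IsProbabilityMeasure (μ.map ξ₀) := Measure.isProbabilityMeasure_map hmeas₀.aemeasurable
  refine (Measure.pi_eq fun B hB => ?_).symm
  rw [Measure.map_apply hV (MeasurableSet.univ_pi hB)]
  set sets : (p : ℕ × Fin k) → Set ℝ :=
    fun p => if h : p.1 < n then B ⟨p.1, h⟩ else Set.univ with hsets
  have hpre : (fun ω (i : Fin n) => ξ (i : ℕ) j ω) ⁻¹' (Set.univ.pi B)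
      = ⋂ p ∈ (Finset.range n ×ˢ ({j} : Finset (Fin k))),
          (fun p : ℕ × Fin k => ξ p.1 p.2) p ⁻¹' sets p := by
    ext ω
    simp only [Set.mem_preimage, Set.mem_pi, Set.mem_univ, true_implies, Set.mem_iInter,
      Finset.mem_product, Finset.mem_range, Finset.mem_singleton]
    constructor
    · rintro h ⟨a, b⟩ ⟨ha, hb⟩
      subst hb
      rw [hsets]
      simp only [dif_pos ha]
      exact h ⟨a, ha⟩
    · intro h i
      have := h ((i : ℕ), j) ⟨i.isLt, rfl⟩
      rw [hsets] at this
      simp only [dif_pos i.isLt, Fin.eta] at this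
      exact this
  rw [hpre, hindep.measure_inter_preimage_eq_mul _ (fun p _ => ?_)]
  swap
  · rw [hsets]
    dsimp only
    split
    · exact hB _
    · exact MeasurableSet.univ
  rw [Finset.prod_product]
  rw [Finset.prod_congr rfl (fun a ha => Finset.prod_singleton
    (f := fun b => μ ((fun ω => ξ a b ω) ⁻¹' sets (a, b))) (a := j))]
  rw [← Fin.prod_univ_eq_prod_range (fun a => μ ((fun ω => ξ a j ω) ⁻¹' sets (a, j))) n]
  refine Finset.prod_congr rfl fun i _ => ?_
  have hB' : sets ((i : ℕ), j) = B i := by rw [hsets]; simp [i.isLt]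
  rw [hB', ← Measure.map_apply (hmeas i j) (hB i), (hident i j).map_eq]

open scoped ENNReal in
lemma aux_pow_int {k n : ℕ} {Ω : Type} [MeasurableSpace Ω] (μ : Measure Ω)
    [IsProbabilityMeasure μ]
    (ξ : ℕ → Fin k → Ω → ℝ) (ξ₀ : Ω → ℝ) (hmeas₀ : Measurable ξ₀)
    (hmeas : ∀ i j, Measurable (ξ i j))
    (hident : ∀ i j, IdentDistrib (ξ i j) ξ₀ μ μ)
    (hmom : Integrable (fun ω => |ξ₀ ω| ^ (k - 1)) μ)
    (a : ℝ) (j : Fin k) (e : ℕ) (he : e ≤ k - 1) (h : Ω → ℝ) (hhm : Measurable h)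
    (hhb : ∀ ω, |h ω| ≤ 1) :
    Integrable (fun ω => (a + ∑ i ∈ Finset.range n, ξ i j ω) ^ e * h ω) μ := by
  have hZmeas : Measurable (fun ω => a + ∑ i ∈ Finset.range n, ξ i j ω) :=
    measurable_const.add (Finset.measurable_sum _ fun i _ => hmeas i j)
  rcases Nat.eq_zero_or_pos e with rfl | hepos
  · simp only [pow_zero, one_mul]
    exact Integrable.mono' (integrable_const 1) hhm.aestronglyMeasurable
      (Filter.Eventually.of_forall fun ω => by simpa [Real.norm_eq_abs] using hhb ω)
  · have hkm1 : (k - 1 : ℕ) ≠ 0 := by omega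
    have hq0 : ((k - 1 : ℕ) : ℝ≥0∞) ≠ 0 := by exact_mod_cast Nat.cast_ne_zero.2 hkm1
    have hqt : ((k - 1 : ℕ) : ℝ≥0∞) ≠ ⊤ := ENNReal.natCast_ne_top _
    have h1 : Integrable (fun ω => ‖ξ₀ ω‖ ^ (((k - 1 : ℕ) : ℝ≥0∞).toReal)) μ := by
      rw [show (fun ω => ‖ξ₀ ω‖ ^ (((k - 1 : ℕ) : ℝ≥0∞).toReal))
          = fun ω => |ξ₀ ω| ^ (k - 1) from funext fun ω => by
        rw [Real.norm_eq_abs, ENNReal.toReal_natCast, Real.rpow_natCast]]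
      exact hmom
    have hLp0 : MemLp ξ₀ ((k - 1 : ℕ) : ℝ≥0∞) μ := by
      refine (memLp_norm_rpow_iff (p := ((k - 1 : ℕ) : ℝ≥0∞))
        hmeas₀.aestronglyMeasurable hq0 hqt).1 ?_
      rw [ENNReal.div_self hq0 hqt, memLp_one_iff_integrable]
      exact h1
    have hLpξ : ∀ i : ℕ, MemLp (ξ i j) ((k - 1 : ℕ) : ℝ≥0∞) μ := fun i =>
      (hident i j).symm.memLp_snd hLp0
    have hZLp : MemLp (fun ω => a + ∑ i ∈ Finset.range n, ξ i j ω) ((k - 1 : ℕ) : ℝ≥0∞) μ :=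
      (memLp_const a).add (memLp_finsetSum (Finset.range n) fun i _ => hLpξ i)
    have hZe : MemLp (fun ω => a + ∑ i ∈ Finset.range n, ξ i j ω) ((e : ℕ) : ℝ≥0∞) μ :=
      hZLp.mono_exponent (by exact_mod_cast he)
    have he0 : ((e : ℕ) : ℝ≥0∞) ≠ 0 := by
      exact_mod_cast Nat.cast_ne_zero.2 (Nat.pos_iff_ne_zero.1 hepos)
    have hint1 : Integrable
        (fun ω => ‖a + ∑ i ∈ Finset.range n, ξ i j ω‖ ^ (((e : ℕ) : ℝ≥0∞).toReal)) μ := by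
      have h3 := (memLp_norm_rpow_iff (q := ((e : ℕ) : ℝ≥0∞)) hZe.aestronglyMeasurable he0
        (ENNReal.natCast_ne_top _)).2 hZe
      rw [ENNReal.div_self he0 (ENNReal.natCast_ne_top _), memLp_one_iff_integrable] at h3
      exact h3
    have hint2 : Integrable (fun ω => |a + ∑ i ∈ Finset.range n, ξ i j ω| ^ e) μ := by
      rw [show (fun ω => |a + ∑ i ∈ Finset.range n, ξ i j ω| ^ e)
          = fun ω => ‖a + ∑ i ∈ Finset.range n, ξ i j ω‖ ^ (((e : ℕ) : ℝ≥0∞).toReal) from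
        funext fun ω => by rw [Real.norm_eq_abs, ENNReal.toReal_natCast, Real.rpow_natCast]]
      exact hint1
    refine Integrable.mono' hint2 ((hZmeas.pow_const e).mul hhm).aestronglyMeasurable
      (Filter.Eventually.of_forall fun ω => ?_)
    rw [Real.norm_eq_abs, abs_mul, abs_pow]
    exact mul_le_of_le_one_right (pow_nonneg (abs_nonneg _) e) (hhb ω)

/-- exchangeability identity E[Δ(x+S_n)·Σ_n] = Δ(x)·E[Σ_n], where
Σ_n counts the increments exceeding the threshold c in absolute value. -/
theorem vandermonde_exchangeable_count
    (k : ℕ) {Ω : Type} [MeasurableSpace Ω] (μ : Measure Ω) [IsProbabilityMeasure μ]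
    (ξ : ℕ → Fin k → Ω → ℝ) (ξ₀ : Ω → ℝ) (hmeas₀ : Measurable ξ₀)
    (hmeas : ∀ i j, Measurable (ξ i j))
    (hindep : iIndepFun (fun p : ℕ × Fin k => ξ p.1 p.2) μ)
    (hident : ∀ i j, IdentDistrib (ξ i j) ξ₀ μ μ)
    (hmean : ∫ ω, ξ₀ ω ∂μ = 0)
    (S : ℕ → Ω → Fin k → ℝ)
    (hS : ∀ n ω j, S n ω j = ∑ i ∈ Finset.range n, ξ i j ω)
    (hSmeas : ∀ n, StronglyMeasurable (S n))
    (hmom : Integrable (fun ω => |ξ₀ ω| ^ (k - 1)) μ)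
    (c : ℝ) (hc : 0 < c) (x : Fin k → ℝ) (n : ℕ)
    (Sig : Ω → ℝ)
    (hSig : ∀ ω, Sig ω = ∑ i ∈ Finset.range n, ∑ j : Fin k,
        if c < |ξ i j ω| then (1 : ℝ) else 0)
    (hint : Integrable (fun ω => vdm k (fun j => x j + S n ω j) * Sig ω) μ) :
    ∫ ω, vdm k (fun j => x j + S n ω j) * Sig ω ∂μ
      = vdm k x * ∫ ω, Sig ω ∂μ := by
  classical
  rcases Nat.eq_zero_or_pos k with hk0 | hkpos
  · subst hk0
    have hSig0 : Sig = fun _ => 0 := funext fun ω => by simp [hSig ω]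
    rw [hSig0]
    simp
  -- the threshold indicator
  set fc : ℝ → ℝ := fun t => if c < |t| then 1 else 0 with hfc
  have hfc_meas : Measurable fc :=
    Measurable.ite (measurableSet_lt measurable_const measurable_abs)
      measurable_const measurable_const
  have hfc_le : ∀ t, |fc t| ≤ 1 := fun t => by
    rw [hfc]; dsimp only; split <;> simp
  have hpow : ∀ (a : ℝ) (j : Fin k) (e : ℕ), e ≤ k - 1 → ∀ (h : Ω → ℝ), Measurable h →
      (∀ ω, |h ω| ≤ 1) →
      Integrable (fun ω => (a + ∑ i ∈ Finset.range n, ξ i j ω) ^ e * h ω) μ :=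
    fun a j e he h hm hb => aux_pow_int μ ξ ξ₀ hmeas₀ hmeas hident hmom a j e he h hm hb
  have hcol : ∀ j : Fin k, μ.map (fun ω (i : Fin n) => ξ (i : ℕ) j ω)
      = Measure.pi (fun _ : Fin n => μ.map ξ₀) := fun j =>
    aux_map_col μ ξ ξ₀ hmeas₀ hmeas hindep hident j
  set jr : Fin k := ⟨0, hkpos⟩ with hjr
  have idcol : ∀ j : Fin k, IdentDistrib (fun ω (i : Fin n) => ξ (i : ℕ) j ω)
      (fun ω (i : Fin n) => ξ (i : ℕ) jr ω) μ μ := fun j =>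
    ⟨(measurable_pi_lambda (fun ω (i : Fin n) => ξ (i : ℕ) j ω)
        fun i => hmeas (i : ℕ) j).aemeasurable,
     (measurable_pi_lambda (fun ω (i : Fin n) => ξ (i : ℕ) jr ω)
        fun i => hmeas (i : ℕ) jr).aemeasurable,
     by rw [hcol j, hcol jr]⟩
  set m : ℕ → ℝ := fun r => ∫ ω, (∑ i ∈ Finset.range n, ξ i jr ω) ^ r ∂μ with hmdef
  set q : ℕ → ℕ → ℝ :=
    fun i₀ r => ∫ ω, (∑ i ∈ Finset.range n, ξ i jr ω) ^ r * fc (ξ i₀ jr ω) ∂μ with hqdef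
  set α : ℝ := ∫ ω, fc (ξ₀ ω) ∂μ with hαdef
  have hαeq : ∀ (i : ℕ) (j : Fin k), ∫ ω, fc (ξ i j ω) ∂μ = α := fun i j =>
    ((hident i j).comp hfc_meas).integral_eq
  have hZsum : ∀ (j : Fin k) (ω : Ω), ∑ i ∈ Finset.range n, ξ i j ω
      = ∑ i : Fin n, ξ ((i : Fin n) : ℕ) j ω := fun j ω =>
    (Fin.sum_univ_eq_sum_range (fun i => ξ i j ω) n).symm
  have hmcol : ∀ (j : Fin k) (r : ℕ),
      ∫ ω, (∑ i ∈ Finset.range n, ξ i j ω) ^ r ∂μ = m r := by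
    intro j r
    have hg : Measurable (fun y : Fin n → ℝ => (∑ i : Fin n, y i) ^ r) :=
      (Finset.measurable_sum _ fun i _ => measurable_pi_apply i).pow_const r
    have h := ((idcol j).comp hg).integral_eq
    calc ∫ ω, (∑ i ∈ Finset.range n, ξ i j ω) ^ r ∂μ
        = ∫ ω, ((fun y : Fin n → ℝ => (∑ i : Fin n, y i) ^ r)
            ∘ (fun ω (i : Fin n) => ξ (i : ℕ) j ω)) ω ∂μ :=
          integral_congr_ae (Filter.Eventually.of_forall fun ω => by
            simp only [Function.comp_apply]
            rw [hZsum j ω])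
      _ = ∫ ω, ((fun y : Fin n → ℝ => (∑ i : Fin n, y i) ^ r)
            ∘ (fun ω (i : Fin n) => ξ (i : ℕ) jr ω)) ω ∂μ := h
      _ = m r := by
          rw [hmdef]
          exact integral_congr_ae (Filter.Eventually.of_forall fun ω => by
            simp only [Function.comp_apply]
            rw [← hZsum jr ω])
  have hqcol : ∀ (j : Fin k) (i₀ : ℕ), i₀ < n → ∀ (r : ℕ),
      ∫ ω, (∑ i ∈ Finset.range n, ξ i j ω) ^ r * fc (ξ i₀ j ω) ∂μ = q i₀ r := by
    intro j i₀ hi₀ r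
    have hg : Measurable (fun y : Fin n → ℝ =>
        (∑ i : Fin n, y i) ^ r * fc (y ⟨i₀, hi₀⟩)) :=
      ((Finset.measurable_sum _ fun i _ => measurable_pi_apply i).pow_const r).mul
        (hfc_meas.comp (measurable_pi_apply _))
    have h := ((idcol j).comp hg).integral_eq
    calc ∫ ω, (∑ i ∈ Finset.range n, ξ i j ω) ^ r * fc (ξ i₀ j ω) ∂μ
        = ∫ ω, ((fun y : Fin n → ℝ => (∑ i : Fin n, y i) ^ r * fc (y ⟨i₀, hi₀⟩))
            ∘ (fun ω (i : Fin n) => ξ (i : ℕ) j ω)) ω ∂μ :=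
          integral_congr_ae (Filter.Eventually.of_forall fun ω => by
            simp only [Function.comp_apply]
            rw [hZsum j ω])
      _ = ∫ ω, ((fun y : Fin n → ℝ => (∑ i : Fin n, y i) ^ r * fc (y ⟨i₀, hi₀⟩))
            ∘ (fun ω (i : Fin n) => ξ (i : ℕ) jr ω)) ω ∂μ := h
      _ = q i₀ r := by
          rw [hqdef]
          exact integral_congr_ae (Filter.Eventually.of_forall fun ω => by
            simp only [Function.comp_apply]
            rw [← hZsum jr ω])
  -- the moment polynomials
  set pM : ℕ → Polynomial ℝ := fun e => ∑ r ∈ Finset.range (e + 1),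
      Polynomial.C ((e.choose r : ℝ) * m (e - r)) * Polynomial.X ^ r with hpMdef
  set pQ : ℕ → ℕ → Polynomial ℝ := fun i₀ e => ∑ r ∈ Finset.range (e + 1),
      Polynomial.C ((e.choose r : ℝ) * q i₀ (e - r)) * Polynomial.X ^ r with hpQdef
  set pD : ℕ → ℕ → Polynomial ℝ := fun i₀ e => pQ i₀ e - Polynomial.C α * pM e with hpDdef
  have hm0 : m 0 = 1 := by rw [hmdef]; simp
  have hq0 : ∀ i₀ : ℕ, q i₀ 0 = α := fun i₀ => by
    rw [hqdef]
    simp only [pow_zero, one_mul]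
    exact hαeq i₀ jr
  have hcoeff : ∀ (u : ℕ → ℝ) (e r' : ℕ),
      (∑ r ∈ Finset.range (e + 1),
        Polynomial.C ((e.choose r : ℝ) * u (e - r)) * Polynomial.X ^ r).coeff r'
      = if r' ≤ e then (e.choose r' : ℝ) * u (e - r') else 0 := by
    intro u e r'
    rw [Polynomial.finset_sum_coeff]
    simp only [Polynomial.coeff_C_mul, Polynomial.coeff_X_pow, mul_ite, mul_one, mul_zero]
    rw [Finset.sum_ite_eq (Finset.range (e + 1)) r' (fun r => (e.choose r : ℝ) * u (e - r))]
    simp only [Finset.mem_range, Nat.lt_succ_iff]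
  have hMtop : ∀ e : ℕ, (pM e).coeff e = 1 := by
    intro e
    rw [hpMdef]
    dsimp only
    rw [hcoeff m e e, if_pos le_rfl, Nat.choose_self, Nat.sub_self, hm0]
    simp
  have hMle : ∀ e : ℕ, (pM e).natDegree ≤ e := by
    intro e
    rw [hpMdef]
    dsimp only
    refine Polynomial.natDegree_sum_le_of_forall_le _ _ fun r hr => ?_
    refine le_trans (Polynomial.natDegree_C_mul_le _ _) ?_
    rw [Polynomial.natDegree_X_pow]
    exact Nat.lt_succ_iff.1 (Finset.mem_range.1 hr)
  have hMdeg : ∀ e : ℕ, (pM e).natDegree = e := fun e =>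
    Polynomial.natDegree_eq_of_le_of_coeff_ne_zero (hMle e)
      (by rw [hMtop e]; exact one_ne_zero)
  have hMmonic : ∀ e : ℕ, (pM e).Monic := fun e =>
    Polynomial.monic_of_natDegree_le_of_coeff_eq_one e (hMle e) (hMtop e)
  have hDdeg : ∀ (i₀ e : ℕ), (pD i₀ e).degree < ((e : ℕ) : WithBot ℕ) := by
    intro i₀ e
    rw [Polynomial.degree_lt_iff_coeff_zero]
    intro m' hm'
    rw [hpDdef]
    dsimp only
    rw [Polynomial.coeff_sub, Polynomial.coeff_C_mul]
    rw [hpQdef, hpMdef]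
    dsimp only
    rw [hcoeff (q i₀) e m', hcoeff m e m']
    rcases eq_or_lt_of_le hm' with hEq | hlt
    · subst hEq
      rw [if_pos le_rfl, if_pos le_rfl, Nat.choose_self, Nat.sub_self, hq0 i₀, hm0]
      simp
    · rw [if_neg (by omega), if_neg (by omega)]
      simp
  have hQdecomp : ∀ (i₀ e : ℕ), pQ i₀ e = Polynomial.C α * pM e + pD i₀ e := fun i₀ e => by
    rw [hpDdef]; ring
  -- integral of a single power against pM / pQ
  have hT1 : ∀ (j : Fin k) (e : ℕ), e ≤ k - 1 →
      ∫ ω, (x j + ∑ i ∈ Finset.range n, ξ i j ω) ^ e ∂μ = (pM e).eval (x j) := by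
    intro j e he
    have hexp : ∀ ω : Ω, (x j + ∑ i ∈ Finset.range n, ξ i j ω) ^ e
        = ∑ r ∈ Finset.range (e + 1),
            ((x j) ^ r * (e.choose r : ℝ)) * (∑ i ∈ Finset.range n, ξ i j ω) ^ (e - r) := by
      intro ω
      rw [add_pow]
      exact Finset.sum_congr rfl fun r _ => by ring
    rw [integral_congr_ae (Filter.EventuallyEq.of_eq (funext hexp)),
      integral_finset_sum _ (fun r hr => by
        simpa using ((hpow 0 j (e - r) (le_trans (Nat.sub_le e r) he)
          (fun _ => 1) measurable_const (by simp)).const_mul ((x j) ^ r * (e.choose r : ℝ))))]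
    calc ∑ r ∈ Finset.range (e + 1),
          ∫ ω, ((x j) ^ r * (e.choose r : ℝ)) * (∑ i ∈ Finset.range n, ξ i j ω) ^ (e - r) ∂μ
        = ∑ r ∈ Finset.range (e + 1), ((x j) ^ r * (e.choose r : ℝ)) * m (e - r) :=
          Finset.sum_congr rfl fun r _ => by rw [integral_const_mul, hmcol j (e - r)]
      _ = (pM e).eval (x j) := by
          rw [hpMdef]
          dsimp only
          rw [Polynomial.eval_finset_sum]
          exact (Finset.sum_congr rfl fun r _ => by
            rw [Polynomial.eval_mul, Polynomial.eval_C, Polynomial.eval_pow,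
              Polynomial.eval_X]; ring).symm
  have hT2 : ∀ (j : Fin k) (i₀ : ℕ), i₀ < n → ∀ (e : ℕ), e ≤ k - 1 →
      ∫ ω, (x j + ∑ i ∈ Finset.range n, ξ i j ω) ^ e * fc (ξ i₀ j ω) ∂μ
        = (pQ i₀ e).eval (x j) := by
    intro j i₀ hi₀ e he
    have hexp : ∀ ω : Ω, (x j + ∑ i ∈ Finset.range n, ξ i j ω) ^ e * fc (ξ i₀ j ω)
        = ∑ r ∈ Finset.range (e + 1), ((x j) ^ r * (e.choose r : ℝ))
            * ((∑ i ∈ Finset.range n, ξ i j ω) ^ (e - r) * fc (ξ i₀ j ω)) := by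
      intro ω
      rw [add_pow, Finset.sum_mul]
      exact Finset.sum_congr rfl fun r _ => by ring
    rw [integral_congr_ae (Filter.EventuallyEq.of_eq (funext hexp)),
      integral_finset_sum _ (fun r hr => by
        simpa using ((hpow 0 j (e - r) (le_trans (Nat.sub_le e r) he)
          (fun ω => fc (ξ i₀ j ω)) (hfc_meas.comp (hmeas i₀ j))
          (fun ω => hfc_le _)).const_mul ((x j) ^ r * (e.choose r : ℝ))))]
    calc ∑ r ∈ Finset.range (e + 1), ∫ ω, ((x j) ^ r * (e.choose r : ℝ))
            * ((∑ i ∈ Finset.range n, ξ i j ω) ^ (e - r) * fc (ξ i₀ j ω)) ∂μ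
        = ∑ r ∈ Finset.range (e + 1), ((x j) ^ r * (e.choose r : ℝ)) * q i₀ (e - r) :=
          Finset.sum_congr rfl fun r _ => by
            rw [integral_const_mul, hqcol j i₀ hi₀ (e - r)]
      _ = (pQ i₀ e).eval (x j) := by
          rw [hpQdef]
          dsimp only
          rw [Polynomial.eval_finset_sum]
          exact (Finset.sum_congr rfl fun r _ => by
            rw [Polynomial.eval_mul, Polynomial.eval_C, Polynomial.eval_pow,
              Polynomial.eval_X]; ring).symm
  -- the key identity for a single (i₀, j₀)
  have hkey : ∀ (i₀ : ℕ), i₀ < n → ∀ (j₀ : Fin k),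
      Integrable (fun ω => vdm k (fun j => x j + S n ω j) * fc (ξ i₀ j₀ ω)) μ ∧
      ∫ ω, vdm k (fun j => x j + S n ω j) * fc (ξ i₀ j₀ ω) ∂μ
        = (Matrix.of fun i j : Fin k =>
            (if j = j₀ then Polynomial.C α * pM (i : ℕ) + pD i₀ (i : ℕ)
              else pM (i : ℕ)).eval (x j)).det := by
    intro i₀ hi₀ j₀
    set gg : Equiv.Perm (Fin k) → Fin k → (Fin n → ℝ) → ℝ := fun τ j y =>
      (x j + ∑ i : Fin n, y i) ^ ((τ j : ℕ))
        * (if j = j₀ then fc (y ⟨i₀, hi₀⟩) else 1) with hgg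
    have hggmeas : ∀ τ j, Measurable (gg τ j) := by
      intro τ j
      rw [hgg]
      dsimp only
      refine Measurable.mul ?_ ?_
      · exact (measurable_const.add
          (Finset.measurable_sum _ fun i _ => measurable_pi_apply i)).pow_const _
      · by_cases h : j = j₀
        · simp only [if_pos h]
          exact hfc_meas.comp (measurable_pi_apply _)
        · simp only [if_neg h]
          exact measurable_const
    have hggcol : ∀ τ (j : Fin k) ω, gg τ j (fun i : Fin n => ξ ((i : Fin n) : ℕ) j ω)
        = (x j + ∑ i ∈ Finset.range n, ξ i j ω) ^ ((τ j : ℕ))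
            * (if j = j₀ then fc (ξ i₀ j ω) else 1) := by
      intro τ j ω
      rw [hgg]
      dsimp only
      rw [← hZsum j ω]
    have hggint : ∀ τ (j : Fin k),
        Integrable (fun ω => gg τ j (fun i => ξ (i : ℕ) j ω)) μ := by
      intro τ j
      have hb : ∀ ω, |(if j = j₀ then fc (ξ i₀ j ω) else 1)| ≤ 1 := fun ω => by
        split
        · exact hfc_le _
        · simp
      have hmeas' : Measurable (fun ω => (if j = j₀ then fc (ξ i₀ j ω) else 1)) := by
        by_cases h : j = j₀
        · simp only [if_pos h]
          exact hfc_meas.comp (hmeas i₀ j)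
        · simp only [if_neg h]
          exact measurable_const
      exact (hpow (x j) j (τ j) (Nat.le_pred_of_lt (τ j).isLt) _ hmeas' hb).congr
        (Filter.Eventually.of_forall fun ω => (hggcol τ j ω).symm)
    have hprod := fun τ => aux_prod_indep μ ξ hmeas hindep (gg τ) (hggmeas τ) (hggint τ)
      Finset.univ
    have hvdmpt : ∀ ω, vdm k (fun j => x j + S n ω j) * fc (ξ i₀ j₀ ω)
        = ∑ τ : Equiv.Perm (Fin k), ((Equiv.Perm.sign τ : ℤ) : ℝ)
            * ∏ j : Fin k, gg τ j (fun i => ξ (i : ℕ) j ω) := by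
      intro ω
      have h1 : (fun j => x j + S n ω j)
          = fun j => x j + ∑ i ∈ Finset.range n, ξ i j ω :=
        funext fun j => by rw [hS n ω j]
      rw [h1, aux_vdm_expand, Finset.sum_mul]
      refine Finset.sum_congr rfl fun τ _ => ?_
      rw [show ∏ j : Fin k, gg τ j (fun i => ξ (i : ℕ) j ω)
          = (∏ j : Fin k, (x j + ∑ i ∈ Finset.range n, ξ i j ω) ^ ((τ j : ℕ)))
              * fc (ξ i₀ j₀ ω) from ?_]
      · ring
      · rw [Finset.prod_congr rfl fun j _ => hggcol τ j ω, Finset.prod_mul_distrib,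
          Finset.prod_ite_eq' Finset.univ j₀ (fun j => fc (ξ i₀ j ω)),
          if_pos (Finset.mem_univ j₀)]
    constructor
    · exact (integrable_finset_sum _ fun τ _ => ((hprod τ).1.const_mul _)).congr
        (Filter.Eventually.of_forall fun ω => (hvdmpt ω).symm)
    · rw [integral_congr_ae (Filter.EventuallyEq.of_eq (funext hvdmpt)),
        integral_finset_sum _ (fun τ _ => (hprod τ).1.const_mul _), Matrix.det_apply']
      refine Finset.sum_congr rfl fun τ _ => ?_
      rw [integral_const_mul, (hprod τ).2]
      congr 1
      refine Finset.prod_congr rfl fun j _ => ?_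
      rw [Matrix.of_apply]
      by_cases h : j = j₀
      · rw [if_pos h, ← hQdecomp i₀ ((τ j : ℕ))]
        rw [show (fun ω => gg τ j (fun i => ξ (i : ℕ) j ω))
            = fun ω => (x j + ∑ i ∈ Finset.range n, ξ i j ω) ^ ((τ j : ℕ))
                * fc (ξ i₀ j ω) from funext fun ω => by rw [hggcol τ j ω, if_pos h]]
        exact hT2 j i₀ hi₀ (τ j) (Nat.le_pred_of_lt (τ j).isLt)
      · rw [if_neg h]
        rw [show (fun ω => gg τ j (fun i => ξ (i : ℕ) j ω))
            = fun ω => (x j + ∑ i ∈ Finset.range n, ξ i j ω) ^ ((τ j : ℕ)) from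
          funext fun ω => by rw [hggcol τ j ω, if_neg h, mul_one]]
        exact hT1 j (τ j) (Nat.le_pred_of_lt (τ j).isLt)
  -- integrability of the indicators
  have hfcint : ∀ (i : ℕ) (j : Fin k), Integrable (fun ω => fc (ξ i j ω)) μ := fun i j =>
    Integrable.mono' (integrable_const 1) (hfc_meas.comp (hmeas i j)).aestronglyMeasurable
      (Filter.Eventually.of_forall fun ω => by
        simpa [Real.norm_eq_abs] using hfc_le (ξ i j ω))
  have hSigpt : ∀ ω, Sig ω = ∑ i ∈ Finset.range n, ∑ j : Fin k, fc (ξ i j ω) := hSig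
  have hRHS : ∫ ω, Sig ω ∂μ = (n : ℝ) * ((k : ℝ) * α) := by
    rw [integral_congr_ae (Filter.EventuallyEq.of_eq (funext hSigpt)),
      integral_finset_sum _ (fun i _ => integrable_finset_sum _ fun j _ => hfcint i j)]
    rw [Finset.sum_congr rfl fun i _ =>
      integral_finset_sum Finset.univ (fun j _ => hfcint i j)]
    rw [Finset.sum_congr rfl fun i _ => Finset.sum_congr rfl fun j _ => hαeq i j]
    rw [Finset.sum_congr rfl fun i _ =>
      (by rw [Finset.sum_const, Finset.card_univ, Fintype.card_fin, nsmul_eq_mul] :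
        ∑ _j : Fin k, α = (k : ℝ) * α)]
    rw [Finset.sum_const, Finset.card_range, nsmul_eq_mul]
  have hLHS : ∫ ω, vdm k (fun j => x j + S n ω j) * Sig ω ∂μ
      = (n : ℝ) * ((k : ℝ) * α * (Matrix.vandermonde x).det) := by
    have hpt : ∀ ω, vdm k (fun j => x j + S n ω j) * Sig ω
        = ∑ i ∈ Finset.range n, ∑ j : Fin k,
            vdm k (fun j' => x j' + S n ω j') * fc (ξ i j ω) := by
      intro ω
      rw [hSigpt ω, Finset.mul_sum]
      exact Finset.sum_congr rfl fun i _ => Finset.mul_sum _ _ _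
    rw [integral_congr_ae (Filter.EventuallyEq.of_eq (funext hpt)),
      integral_finset_sum _ (fun i hi => integrable_finset_sum _ fun j _ =>
        (hkey i (Finset.mem_range.1 hi) j).1)]
    rw [Finset.sum_congr rfl fun i hi => integral_finset_sum Finset.univ
      (fun j _ => (hkey i (Finset.mem_range.1 hi) j).1)]
    rw [Finset.sum_congr rfl fun i hi => Finset.sum_congr rfl fun j _ =>
      (hkey i (Finset.mem_range.1 hi) j).2]
    rw [Finset.sum_congr rfl fun i hi => aux_sum_det x α (fun i' : Fin k => pM (i' : ℕ))
      (fun i' : Fin k => pD i (i' : ℕ)) (fun i' => hMmonic (i' : ℕ))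
      (fun i' => hMdeg (i' : ℕ)) (fun i' => hDdeg i (i' : ℕ))]
    rw [Finset.sum_const, Finset.card_range, nsmul_eq_mul]
  rw [hLHS, hRHS, aux_vdm_det]
  ring

end
end
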